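/- arXiv:1307.4277 — 8 statements merged into one kernel-verified Lean document; each statement's English description precedes it below -/
import Mathlib

section
/- Let a be a positive real number with a ≠ 1, and let d : ℝ → ℝ be an additive function such that the mapping φ : ℝ → ℝ defined by φ(x) = d(aˣ) − aˣ·ln(a)·d(x) is regular (i.e., locally bounded, or continuous, or Lebesgue measurable). Then there exists a real derivation χ : ℝ → ℝ such that d(x) = χ(x) + d(1)·x for all x ∈ ℝ. -/
open Real Set

open Pointwise

/-- A function `φ` is locally bounded on a set `s` if every point of `s` has a
neighborhood (within `s`) on which `φ` is bounded. -/
def LocallyBoundedOn (φ : ℝ → ℝ) (s : Set ℝ) : Prop :=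
  ∀ x ∈ s, ∃ C : ℝ, ∀ᶠ y in nhdsWithin x s, |φ y| ≤ C

/-- A real-valued function is *regular* on its domain `s` if it is locally bounded,
or continuous, or Lebesgue measurable on `s`. -/
def RegularOn (φ : ℝ → ℝ) (s : Set ℝ) : Prop :=
  LocallyBoundedOn φ s ∨ ContinuousOn φ s ∨ Measurable (s.restrict φ)

/-- A real derivation: an additive function satisfying the Leibniz rule. -/
def IsRealDerivation (χ : ℝ → ℝ) : Prop :=
  (∀ x y : ℝ, χ (x + y) = χ x + χ y) ∧ (∀ x y : ℝ, χ (x * y) = x * χ y + y * χ x)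

private theorem abs_sub_le' (x y : ℝ) : |x - y| ≤ |x| + |y| := by
  simpa [sub_eq_add_neg] using abs_add_le x (-y)

/-- An additive function bounded near `0` is linear. -/
private theorem additive_linear_of_bounded (A : ℝ → ℝ)
    (hA : ∀ x y : ℝ, A (x + y) = A x + A y)
    {C δ : ℝ} (hδ : 0 < δ) (hb : ∀ x : ℝ, |x| < δ → |A x| ≤ C) :
    ∀ x : ℝ, A x = A 1 * x := by
  have hA0 : A 0 = 0 := by have h := hA 0 0; norm_num at h; linarith
  have hq : ∀ (q : ℚ) (x : ℝ), A ((q : ℝ) * x) = (q : ℝ) * A x := by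
    intro q x
    simpa using map_ratCast_smul (AddMonoidHom.mk' A hA) ℝ ℝ q x
  have hAq : ∀ q : ℚ, A (q : ℝ) = (q : ℝ) * A 1 := by
    intro q; simpa using hq q 1
  set B := fun y : ℝ => A y - A 1 * y with hBdef
  have hBadd : ∀ s t : ℝ, B (s + t) = B s + B t := by
    intro s t; simp only [hBdef]; rw [hA]; ring
  have hBq : ∀ q : ℚ, B (q : ℝ) = 0 := by
    intro q; simp only [hBdef]; rw [hAq]; ring
  have hBper : ∀ (y : ℝ) (q : ℚ), B (y + (q : ℝ)) = B y := by
    intro y q; rw [hBadd, hBq]; ring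
  have hBbd : ∀ y : ℝ, |B y| ≤ C + |A 1| * δ := by
    intro y
    obtain ⟨q, hq'⟩ := exists_rat_near y hδ
    have h1 : B y = B (y - (q : ℝ)) := by
      have h := hBper (y - (q : ℝ)) q
      rw [sub_add_cancel] at h
      exact h
    rw [h1]
    have h2 : |A (y - (q : ℝ))| ≤ C := hb _ hq'
    have h3 : |A 1 * (y - (q : ℝ))| ≤ |A 1| * δ := by
      rw [abs_mul]
      exact mul_le_mul_of_nonneg_left (le_of_lt hq') (abs_nonneg _)
    calc |B (y - (q : ℝ))| = |A (y - (q : ℝ)) - A 1 * (y - (q : ℝ))| := by rw [hBdef]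
      _ ≤ |A (y - (q : ℝ))| + |A 1 * (y - (q : ℝ))| := abs_sub_le' _ _
      _ ≤ C + |A 1| * δ := add_le_add h2 h3
  have hBnat : ∀ (n : ℕ) (y : ℝ), B ((n : ℝ) * y) = (n : ℝ) * B y := by
    intro n
    induction n with
    | zero => intro y; simp only [hBdef]; norm_num [hA0]
    | succ n ih =>
        intro y
        push_cast
        rw [add_mul, one_mul, hBadd, ih]
        ring
  intro x
  have hBx : B x = 0 := by
    by_contra h
    have hpos : 0 < |B x| := abs_pos.mpr h
    obtain ⟨n, hn⟩ := exists_nat_gt ((C + |A 1| * δ) / |B x|)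
    have h2 : C + |A 1| * δ < (n : ℝ) * |B x| := by
      rwa [div_lt_iff₀ hpos] at hn
    have h3 := hBbd ((n : ℝ) * x)
    rw [hBnat n x, abs_mul, Nat.abs_cast] at h3
    linarith
  simp only [hBdef] at hBx
  linarith

/-- If an additive function is bounded on `a ^ x` for `x` near `0`, it is linear. -/
private theorem additive_linear_of_rpow_bounded {a : ℝ} (ha : 0 < a) (ha1 : a ≠ 1)
    (A : ℝ → ℝ) (hA : ∀ x y : ℝ, A (x + y) = A x + A y)
    {C ε : ℝ} (hε : 0 < ε) (hb : ∀ x : ℝ, |x| < ε → |A (a ^ x)| ≤ C) :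
    ∀ u : ℝ, A u = A 1 * u := by
  have h1 : ContinuousAt (fun w : ℝ => Real.log (1 + w)) 0 := by
    have hc : ContinuousAt (fun w : ℝ => 1 + w) 0 := by fun_prop
    have hl : ContinuousAt Real.log (1 + 0) := Real.continuousAt_log (by norm_num)
    exact hl.comp hc
  have h2 : ContinuousAt (fun w : ℝ => Real.logb a (1 + w)) 0 := by
    have h2' : ContinuousAt (fun w : ℝ => Real.log (1 + w) / Real.log a) 0 := h1.div_const _
    have h3 : (fun w : ℝ => Real.log (1 + w) / Real.log a)
        = fun w : ℝ => Real.logb a (1 + w) := by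
      funext w; rw [Real.log_div_log]
    rwa [h3] at h2'
  have hT : Filter.Tendsto (fun w : ℝ => Real.logb a (1 + w)) (nhds 0) (nhds 0) := by
    simpa using h2.tendsto
  have hev : ∀ᶠ w in nhds (0 : ℝ), |Real.logb a (1 + w)| < ε := by
    have := Metric.tendsto_nhds.mp hT ε hε
    simpa [Real.dist_eq] using this
  obtain ⟨δ, hδpos, hδ⟩ := Metric.eventually_nhds_iff.mp hev
  have hδ'pos : 0 < min δ (1/2) := lt_min hδpos (by norm_num)
  apply additive_linear_of_bounded A hA (C := C + |A 1|) hδ'pos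
  intro w hw
  have hw1 : |w| < δ := lt_of_lt_of_le hw (min_le_left _ _)
  have hw2 : |w| < 1/2 := lt_of_lt_of_le hw (min_le_right _ _)
  have hpos1w : 0 < 1 + w := by
    have := abs_lt.mp hw2; linarith [this.1]
  have hx : |Real.logb a (1 + w)| < ε := hδ (by simpa [Real.dist_eq] using hw1)
  have h5 : a ^ Real.logb a (1 + w) = 1 + w := Real.rpow_logb ha ha1 hpos1w
  have h6 : |A (1 + w)| ≤ C := by rw [← h5]; exact hb _ hx
  have h7 : A w = A (1 + w) - A 1 := by
    have := hA 1 w; linarith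
  rw [h7]
  calc |A (1 + w) - A 1| ≤ |A (1 + w)| + |A 1| := abs_sub_le' _ _
    _ ≤ C + |A 1| := add_le_add h6 le_rfl

/-- A function continuous at `0` is bounded near `0`. -/
private theorem bounded_near_of_continuousAt {F : ℝ → ℝ} (h : ContinuousAt F 0) :
    ∃ C ε : ℝ, 0 < ε ∧ ∀ x : ℝ, |x| < ε → |F x| ≤ C := by
  have h1 := Metric.tendsto_nhds.mp h 1 one_pos
  rw [Metric.eventually_nhds_iff] at h1
  obtain ⟨ε, hε, hb⟩ := h1
  refine ⟨|F 0| + 1, ε, hε, fun x hx => ?_⟩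
  have h2 := hb (y := x) (by simpa [Real.dist_eq] using hx)
  rw [Real.dist_eq] at h2
  have h3 := abs_sub_abs_le_abs_sub (F x) (F 0)
  linarith

theorem stmt_1 (a : ℝ) (ha : 0 < a) (ha1 : a ≠ 1) (d : ℝ → ℝ)
    (hd : ∀ x y : ℝ, d (x + y) = d x + d y)
    (hreg : RegularOn (fun x : ℝ => d (a ^ x) - a ^ x * Real.log a * d x) Set.univ) :
    ∃ χ : ℝ → ℝ, IsRealDerivation χ ∧ ∀ x : ℝ, d x = χ x + d 1 * x := by
  have hd0 : d 0 = 0 := by have h := hd 0 0; norm_num at h; linarith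
  have hdneg : ∀ x : ℝ, d (-x) = -d x := by
    intro x
    have h := hd x (-x)
    have h2 : x + -x = 0 := by ring
    rw [h2, hd0] at h
    linarith
  set φ := fun x : ℝ => d (a ^ x) - a ^ x * Real.log a * d x with hφdef
  -- the key multiplicative identity, first for positive second argument
  have key : ∀ v : ℝ, 0 < v → ∀ u : ℝ, d (u * v) = u * d v + v * d u - d 1 * (u * v) := by
    intro v hv
    set A := fun u : ℝ => d (u * v) - u * d v - v * d u with hAdef
    have hAadd : ∀ u w : ℝ, A (u + w) = A u + A w := by
      intro u w
      simp only [hAdef]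
      rw [add_mul, hd (u * v) (w * v), hd u w]
      ring
    have hA1 : A 1 = -(v * d 1) := by
      simp only [hAdef, one_mul]
      ring
    set y0 := Real.logb a v with hy0
    have hay0 : a ^ y0 = v := Real.rpow_logb ha ha1 hv
    have hFid : ∀ x : ℝ, A (a ^ x) = φ (x + y0) - a ^ x * φ y0 - v * φ x := by
      intro x
      simp only [hAdef, hφdef]
      rw [Real.rpow_add ha, hay0, hd x y0]
      ring
    have hlin : ∀ u : ℝ, A u = A 1 * u := by
      rcases hreg with hlb | hcont | hmeas
      · -- locally bounded case
        obtain ⟨C0, h0⟩ := hlb y0 (mem_univ _)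
        obtain ⟨C1, h1⟩ := hlb 0 (mem_univ _)
        rw [nhdsWithin_univ] at h0 h1
        obtain ⟨δ0, hδ0, hB0⟩ := Metric.eventually_nhds_iff.mp h0
        obtain ⟨δ1, hδ1, hB1⟩ := Metric.eventually_nhds_iff.mp h1
        have hεpos : 0 < min (min δ0 δ1) 1 := lt_min (lt_min hδ0 hδ1) one_pos
        refine additive_linear_of_rpow_bounded ha ha1 A hAadd hεpos
          (C := C0 + Real.exp |Real.log a| * |φ y0| + v * C1) ?_
        intro x hx
        have hx0 : |x| < δ0 := lt_of_lt_of_le hx ((min_le_left _ _).trans (min_le_left _ _))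
        have hx1 : |x| < δ1 := lt_of_lt_of_le hx ((min_le_left _ _).trans (min_le_right _ _))
        have hx2 : |x| ≤ 1 := le_of_lt (lt_of_lt_of_le hx (min_le_right _ _))
        have e0 : |φ (x + y0)| ≤ C0 := by
          apply hB0
          have : dist (x + y0) y0 = |x| := by
            rw [Real.dist_eq]; ring_nf
          rw [this]; exact hx0
        have e1 : |φ x| ≤ C1 := by
          apply hB1
          rw [Real.dist_eq, sub_zero]; exact hx1
        have ea : a ^ x ≤ Real.exp |Real.log a| := by
          rw [Real.rpow_def_of_pos ha]
          apply Real.exp_le_exp.mpr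
          calc Real.log a * x ≤ |Real.log a * x| := le_abs_self _
            _ = |Real.log a| * |x| := abs_mul _ _
            _ ≤ |Real.log a| * 1 := mul_le_mul_of_nonneg_left hx2 (abs_nonneg _)
            _ = |Real.log a| := mul_one _
        have hapos : 0 < a ^ x := Real.rpow_pos_of_pos ha x
        have t1 : |a ^ x * φ y0| ≤ Real.exp |Real.log a| * |φ y0| := by
          rw [abs_mul, abs_of_pos hapos]
          exact mul_le_mul_of_nonneg_right ea (abs_nonneg _)
        have t2 : |v * φ x| ≤ v * C1 := by
          rw [abs_mul, abs_of_pos hv]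
          exact mul_le_mul_of_nonneg_left e1 (le_of_lt hv)
        rw [hFid x]
        calc |φ (x + y0) - a ^ x * φ y0 - v * φ x|
            ≤ |φ (x + y0) - a ^ x * φ y0| + |v * φ x| := abs_sub_le' _ _
          _ ≤ (|φ (x + y0)| + |a ^ x * φ y0|) + |v * φ x| :=
              add_le_add (abs_sub_le' _ _) le_rfl
          _ ≤ C0 + Real.exp |Real.log a| * |φ y0| + v * C1 :=
              add_le_add (add_le_add e0 t1) t2
      · -- continuous case
        have hφc : Continuous φ := continuousOn_univ.mp hcont
        have hexp : Continuous fun x : ℝ => a ^ x := by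
          have h : (fun x : ℝ => a ^ x) = fun x : ℝ => Real.exp (Real.log a * x) := by
            funext x; rw [Real.rpow_def_of_pos ha]
          rw [h]
          exact Real.continuous_exp.comp (continuous_const.mul continuous_id)
        have hFc : Continuous fun x : ℝ => φ (x + y0) - a ^ x * φ y0 - v * φ x :=
          ((hφc.comp (continuous_id.add continuous_const)).sub
            (hexp.mul continuous_const)).sub (continuous_const.mul hφc)
        obtain ⟨C, ε, hεpos, hB⟩ := bounded_near_of_continuousAt hFc.continuousAt
        refine additive_linear_of_rpow_bounded ha ha1 A hAadd hεpos (C := C) ?_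
        intro x hx
        rw [hFid x]
        exact hB x hx
      · -- measurable case
        have hφm : Measurable φ := by
          have h2 := hmeas.comp (MeasurableEquiv.Set.univ ℝ).symm.measurable
          have h3 : (Set.univ : Set ℝ).restrict φ ∘ (MeasurableEquiv.Set.univ ℝ).symm = φ := by
            funext x; rfl
          rwa [h3] at h2
        have hexpm : Measurable fun x : ℝ => a ^ x := by
          have h : (fun x : ℝ => a ^ x) = fun x : ℝ => Real.exp (Real.log a * x) := by
            funext x; rw [Real.rpow_def_of_pos ha]
          rw [h]
          exact Real.measurable_exp.comp (measurable_const.mul measurable_id)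
        have hFm : Measurable fun x : ℝ => φ (x + y0) - a ^ x * φ y0 - v * φ x :=
          ((hφm.comp (measurable_id.add_const y0)).sub
            (hexpm.mul measurable_const)).sub (measurable_const.mul hφm)
        have hlogbm : Measurable (Real.logb a) := by
          unfold Real.logb
          exact Real.measurable_log.div_const _
        set g := (fun x : ℝ => φ (x + y0) - a ^ x * φ y0 - v * φ x) ∘ Real.logb a with hgdef
        have hgm : Measurable g := by rw [hgdef]; exact hFm.comp hlogbm
        have hgA : ∀ u : ℝ, 0 < u → g u = A u := by
          intro u hu
          have h5 : a ^ Real.logb a u = u := Real.rpow_logb ha ha1 hu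
          have h6 : g u = A (a ^ Real.logb a u) := (hFid (Real.logb a u)).symm
          rwa [h5] at h6
        set E : ℕ → Set ℝ := fun n => Set.Ioo (0 : ℝ) 1 ∩ {u : ℝ | |g u| ≤ (n : ℝ)} with hEdef
        have hEmeas : ∀ n, MeasurableSet (E n) := by
          intro n
          exact measurableSet_Ioo.inter (measurableSet_le hgm.abs measurable_const)
        have hcover : Set.Ioo (0 : ℝ) 1 ⊆ ⋃ n : ℕ, E n := by
          intro u hu
          obtain ⟨n, hn⟩ := exists_nat_ge |g u|
          exact Set.mem_iUnion.mpr ⟨n, hu, hn⟩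
        have hposE : ∃ n, 0 < MeasureTheory.volume (E n) := by
          by_contra hcon
          push_neg at hcon
          have hz : ∀ n, MeasureTheory.volume (E n) = 0 :=
            fun n => le_antisymm (hcon n) zero_le
          have hU : MeasureTheory.volume (⋃ n : ℕ, E n) = 0 :=
            MeasureTheory.measure_iUnion_null hz
          have h2 : MeasureTheory.volume (Set.Ioo (0 : ℝ) 1) = 0 :=
            MeasureTheory.measure_mono_null hcover hU
          rw [Real.volume_Ioo] at h2
          norm_num at h2
        obtain ⟨n, hn⟩ := hposE
        have hSt := MeasureTheory.Measure.sub_mem_nhds_zero_of_addHaar_pos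
          MeasureTheory.volume (E n) (hEmeas n) hn
        obtain ⟨ε, hεpos, hball⟩ := Metric.mem_nhds_iff.mp hSt
        have hA0' : A 0 = 0 := by
          have h := hAadd 0 0; norm_num at h; linarith
        have hAneg : ∀ t : ℝ, A (-t) = -A t := by
          intro t
          have h := hAadd t (-t)
          have h2 : t + -t = 0 := by ring
          rw [h2, hA0'] at h
          linarith
        refine additive_linear_of_bounded A hAadd hεpos (C := 2 * (n : ℝ)) ?_
        intro x hx
        have hmem : x ∈ E n - E n := by
          apply hball
          rw [Metric.mem_ball, Real.dist_eq, sub_zero]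
          exact hx
        obtain ⟨p, hp, q, hq, hpq⟩ := Set.mem_sub.mp hmem
        have hAx : A x = A p - A q := by
          rw [← hpq]
          calc A (p - q) = A (p + -q) := by rw [sub_eq_add_neg]
            _ = A p + A (-q) := hAadd p (-q)
            _ = A p - A q := by rw [hAneg]; ring
        have hp' : |A p| ≤ (n : ℝ) := by rw [← hgA p hp.1.1]; exact hp.2
        have hq' : |A q| ≤ (n : ℝ) := by rw [← hgA q hq.1.1]; exact hq.2
        rw [hAx]
        calc |A p - A q| ≤ |A p| + |A q| := abs_sub_le' _ _
          _ ≤ 2 * (n : ℝ) := by linarith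
    intro u
    have h := hlin u
    rw [hA1] at h
    simp only [hAdef] at h
    linear_combination h
  have hmul : ∀ x y : ℝ, d (x * y) = x * d y + y * d x - d 1 * (x * y) := by
    intro x v
    rcases lt_trichotomy v 0 with hv | hv | hv
    · have h := key (-v) (by linarith) (-x)
      rw [neg_mul_neg, hdneg v, hdneg x] at h
      linear_combination h
    · rw [hv]
      simp [hd0]
    · exact key v hv x
  refine ⟨fun x => d x - d 1 * x, ⟨?_, ?_⟩, fun x => by show d x = d x - d 1 * x + d 1 * x; ring⟩
  · intro x y
    show d (x + y) - d 1 * (x + y) = (d x - d 1 * x) + (d y - d 1 * y)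
    rw [hd]; ring
  · intro x y
    show d (x * y) - d 1 * (x * y) = x * (d y - d 1 * y) + y * (d x - d 1 * x)
    linear_combination hmul x y
end

section
/- Let d : ℝ → ℝ be an additive function such that the mapping φ : ℝ → ℝ defined by φ(x) = d(cos(x)) + sin(x)·d(x) is regular (i.e., locally bounded, or continuous, or Lebesgue measurable). Then there exists a real derivation χ : ℝ → ℝ such that d(x) = χ(x) + d(1)·x for all x ∈ ℝ. -/
open Real Set

section AuxLemmas
open MeasureTheory Pointwise

lemma aux_linear_of_bounded (h : ℝ → ℝ) (hadd : ∀ x y, h (x + y) = h x + h y)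
    {a b C : ℝ} (hab : a < b) (hb : ∀ x ∈ Set.Icc a b, |h x| ≤ C) :
    ∀ x, h x = h 1 * x := by
  set H : ℝ →+ ℝ := AddMonoidHom.mk' h hadd with hH
  have hrat : ∀ q : ℚ, h (q : ℝ) = h 1 * q := by
    intro q
    have := map_rat_smul H q (1 : ℝ)
    simp only [Rat.smul_def, smul_eq_mul, mul_one] at this
    have h2 : H ((q:ℝ)) = h (q:ℝ) := rfl
    have h3 : H (1:ℝ) = h 1 := rfl
    rw [h2, h3] at this
    rw [this, mul_comm]
  set g : ℝ → ℝ := fun x => h x - h 1 * x with hg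
  have gadd : ∀ x y, g (x + y) = g x + g y := by
    intro x y; simp only [hg, hadd]; ring
  have gq : ∀ q : ℚ, g (q : ℝ) = 0 := by intro q; simp [hg, hrat q]
  set M : ℝ := C + |h 1| * (|a| + |b|) with hM
  have gbound : ∀ x, |g x| ≤ M := by
    intro x
    obtain ⟨q, hq1, hq2⟩ := exists_rat_btwn (show x - b < x - a by linarith)
    have hmem : x - q ∈ Set.Icc a b := ⟨by linarith, by linarith⟩
    have hx : g x = g (x - q) := by
      have : h x = h (x - q) + h q := by rw [← hadd]; ring_nf
      simp only [hg, this, hrat q]; ring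
    rw [hx]
    have h1 : |h (x - q)| ≤ C := hb _ hmem
    have h2 : |x - (q:ℝ)| ≤ |a| + |b| := by
      rcases hmem with ⟨ha', hb'⟩
      rw [abs_le]; constructor
      · have := neg_abs_le a; linarith [abs_nonneg b]
      · have := le_abs_self b; linarith [abs_nonneg a]
    calc |h (x - q) - h 1 * (x - q)| ≤ |h (x - q)| + |h 1 * (x - q)| := abs_sub _ _
      _ ≤ C + |h 1| * (|a| + |b|) := by
          rw [abs_mul]
          exact add_le_add h1 (mul_le_mul_of_nonneg_left h2 (abs_nonneg _))
  have gnat : ∀ (n : ℕ) (x : ℝ), g (n * x) = n * g x := by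
    intro n; induction n with
    | zero => intro x; have h0 : g 0 = 0 := by
                have := gadd 0 0; simpa using this
              simpa using h0
    | succ n ih => intro x
                   have : ((n : ℝ) + 1) * x = n * x + x := by ring
                   push_cast
                   rw [this, gadd, ih]; ring
  have gzero : ∀ x, g x = 0 := by
    intro x
    by_contra hne
    have hpos : 0 < |g x| := abs_pos.mpr hne
    obtain ⟨n, hn⟩ := exists_nat_gt (M / |g x|)
    have hn1 : (0:ℝ) < n := lt_of_le_of_lt (div_nonneg (le_trans (abs_nonneg _) (gbound 0)) hpos.le) hn
    have := gbound (n * x)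
    rw [gnat n x, abs_mul, abs_of_nonneg hn1.le] at this
    have : (M / |g x|) * |g x| < n * |g x| := by
      apply mul_lt_mul_of_pos_right hn hpos
    rw [div_mul_cancel₀ _ (ne_of_gt hpos)] at this
    linarith [gbound (n*x), (by rw [gnat n x, abs_mul, abs_of_nonneg hn1.le] : |g (n*x)| = n * |g x|)]
  intro x
  have := gzero x
  simp only [hg] at this
  linarith

lemma aux_bound_near (h : ℝ → ℝ) (C : ℝ)
    (hev : ∀ᶠ x in nhds (Real.pi / 2), |h (Real.cos x)| ≤ C) :
    ∃ a b C' : ℝ, a < b ∧ ∀ t ∈ Set.Icc a b, |h t| ≤ C' := by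
  rw [Metric.eventually_nhds_iff] at hev
  obtain ⟨ε, hε, hb⟩ := hev
  have hc : ContinuousAt Real.arccos 0 := Real.continuous_arccos.continuousAt
  rw [Metric.continuousAt_iff] at hc
  obtain ⟨δ, hδ, hδb⟩ := hc ε hε
  set m := min (δ / 2) 1 with hm
  have hm0 : 0 < m := lt_min (by linarith) one_pos
  refine ⟨-m, m, C, by linarith, ?_⟩
  intro t ht
  have htabs : |t| ≤ m := abs_le.mpr ⟨ht.1, ht.2⟩
  have ht1 : -1 ≤ t := le_trans (neg_le_neg (min_le_right _ _)) ht.1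
  have ht2 : t ≤ 1 := le_trans ht.2 (min_le_right _ _)
  have hdist : dist t 0 < δ := by
    rw [Real.dist_eq, sub_zero]
    exact lt_of_le_of_lt htabs (lt_of_le_of_lt (min_le_left _ _) (by linarith))
  have := hδb hdist
  rw [Real.arccos_zero] at this
  have := hb this
  rwa [Real.cos_arccos ht1 ht2] at this

lemma aux_bound_of_measurable (h F : ℝ → ℝ) (hadd : ∀ x y, h (x + y) = h x + h y)
    (hF : Measurable F) (hid : ∀ x, h (Real.cos x) = F x) :
    ∃ a b C : ℝ, a < b ∧ ∀ t ∈ Set.Icc a b, |h t| ≤ C := by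
  have hG : Measurable fun t => |F (Real.arccos t)| :=
    (hF.comp Real.continuous_arccos.measurable).abs
  set A : ℕ → Set ℝ := fun n => Set.Icc (-1 : ℝ) 1 ∩ (fun t => |F (Real.arccos t)|) ⁻¹' Set.Iic (n : ℝ)
    with hA
  have hAm : ∀ n, MeasurableSet (A n) := fun n =>
    measurableSet_Icc.inter (hG measurableSet_Iic)
  have hcover : Set.Icc (-1 : ℝ) 1 ⊆ ⋃ n, A n := by
    intro t ht
    obtain ⟨n, hn⟩ := exists_nat_ge (|F (Real.arccos t)|)
    exact Set.mem_iUnion.mpr ⟨n, ht, hn⟩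
  obtain ⟨n, hn⟩ : ∃ n, 0 < volume (A n) := by
    by_contra hc
    push_neg at hc
    have : volume (⋃ n, A n) = 0 :=
      measure_iUnion_null fun n => le_antisymm (hc n) zero_le
    have h2 : volume (Set.Icc (-1 : ℝ) 1) = 0 :=
      le_antisymm (le_trans (measure_mono hcover) this.le) zero_le
    rw [Real.volume_Icc] at h2
    norm_num at h2
  have hsub : A n - A n ∈ nhds (0 : ℝ) :=
    MeasureTheory.Measure.sub_mem_nhds_zero_of_addHaar_pos volume (A n) (hAm n) hn
  rw [Metric.mem_nhds_iff] at hsub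
  obtain ⟨δ, hδ, hball⟩ := hsub
  refine ⟨-(δ / 2), δ / 2, 2 * n, by linarith, ?_⟩
  intro t ht
  have htmem : t ∈ A n - A n := by
    apply hball
    rw [Metric.mem_ball, Real.dist_eq, sub_zero]
    have : |t| ≤ δ / 2 := abs_le.mpr ⟨ht.1, ht.2⟩
    linarith
  obtain ⟨u, hu, v, hv, huv⟩ := Set.mem_sub.mp htmem
  have hval : ∀ w ∈ A n, |h w| ≤ n := by
    intro w hw
    obtain ⟨⟨hw1, hw2⟩, hw3⟩ := hw
    have : h w = F (Real.arccos w) := by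
      rw [← hid (Real.arccos w), Real.cos_arccos hw1 hw2]
    rw [this]
    exact hw3
  have hsplit : h t = h u - h v := by
    have : h u = h t + h v := by rw [← hadd]; rw [← huv]; ring_nf
    linarith
  rw [hsplit]
  calc |h u - h v| ≤ |h u| + |h v| := abs_sub _ _
    _ ≤ 2 * n := by have := hval u hu; have := hval v hv; linarith

lemma aux_key (h ψ : ℝ → ℝ) (y : ℝ) (hadd : ∀ u v, h (u + v) = h u + h v)
    (hψ : RegularOn ψ Set.univ)
    (hid : ∀ x, h (Real.cos x) =
      (ψ (x + y) + ψ (x - y) - 2 * Real.cos y * ψ x - 2 * Real.cos x * ψ y) / 2) :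
    ∀ u, h u = h 1 * u := by
  set F : ℝ → ℝ := fun x =>
    (ψ (x + y) + ψ (x - y) - 2 * Real.cos y * ψ x - 2 * Real.cos x * ψ y) / 2 with hFdef
  have habs : ∀ x C1 C2 C3, |ψ (x + y)| ≤ C1 → |ψ (x - y)| ≤ C2 → |ψ x| ≤ C3 →
      |F x| ≤ (C1 + C2 + 2 * C3 + 2 * |ψ y|) / 2 := by
    intro x C1 C2 C3 h1 h2 h3
    have e1 : |2 * Real.cos y * ψ x| ≤ 2 * C3 := by
      rw [abs_mul, abs_mul, abs_two]
      have := Real.abs_cos_le_one y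
      have h3' := abs_nonneg (ψ x)
      nlinarith [abs_nonneg (Real.cos y)]
    have e2 : |2 * Real.cos x * ψ y| ≤ 2 * |ψ y| := by
      rw [abs_mul, abs_mul, abs_two]
      have := Real.abs_cos_le_one x
      have h3' := abs_nonneg (ψ y)
      nlinarith [abs_nonneg (Real.cos x)]
    have : |ψ (x + y) + ψ (x - y) - 2 * Real.cos y * ψ x - 2 * Real.cos x * ψ y|
        ≤ C1 + C2 + 2 * C3 + 2 * |ψ y| := by
      calc |ψ (x + y) + ψ (x - y) - 2 * Real.cos y * ψ x - 2 * Real.cos x * ψ y|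
          ≤ |ψ (x + y) + ψ (x - y) - 2 * Real.cos y * ψ x| + |2 * Real.cos x * ψ y| :=
            abs_sub _ _
        _ ≤ (|ψ (x + y) + ψ (x - y)| + |2 * Real.cos y * ψ x|) + |2 * Real.cos x * ψ y| := by
            have := abs_sub (ψ (x + y) + ψ (x - y)) (2 * Real.cos y * ψ x)
            linarith
        _ ≤ ((|ψ (x + y)| + |ψ (x - y)|) + |2 * Real.cos y * ψ x|) + |2 * Real.cos x * ψ y| := by
            have := abs_add_le (ψ (x + y)) (ψ (x - y)); linarith
        _ ≤ C1 + C2 + 2 * C3 + 2 * |ψ y| := by linarith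
    simp only [hFdef]
    rw [abs_div, abs_two]
    linarith
  obtain ⟨a, b, C, hab, hb⟩ : ∃ a b C : ℝ, a < b ∧ ∀ t ∈ Set.Icc a b, |h t| ≤ C := by
    rcases hψ with hlb | hcont | hmeas
    · obtain ⟨C1, h1⟩ := hlb (Real.pi / 2 + y) trivial
      obtain ⟨C2, h2⟩ := hlb (Real.pi / 2 - y) trivial
      obtain ⟨C3, h3⟩ := hlb (Real.pi / 2) trivial
      rw [nhdsWithin_univ] at h1 h2 h3
      have t1 : ∀ᶠ x in nhds (Real.pi / 2), |ψ (x + y)| ≤ C1 := by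
        have hc : Filter.Tendsto (fun x : ℝ => x + y) (nhds (Real.pi / 2))
            (nhds (Real.pi / 2 + y)) := (continuous_id.add continuous_const).tendsto' _ _ rfl
        exact hc.eventually h1
      have t2 : ∀ᶠ x in nhds (Real.pi / 2), |ψ (x - y)| ≤ C2 := by
        have hc : Filter.Tendsto (fun x : ℝ => x - y) (nhds (Real.pi / 2))
            (nhds (Real.pi / 2 - y)) := (continuous_id.sub continuous_const).tendsto' _ _ rfl
        exact hc.eventually h2
      apply aux_bound_near h ((C1 + C2 + 2 * C3 + 2 * |ψ y|) / 2)
      filter_upwards [t1, t2, h3] with x hx1 hx2 hx3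
      rw [hid x]
      exact habs x C1 C2 C3 hx1 hx2 hx3
    · have hc : Continuous ψ := continuousOn_univ.mp hcont
      have hFc : Continuous F := by
        apply Continuous.div_const
        exact (((hc.comp (continuous_id.add continuous_const)).add
          (hc.comp (continuous_id.sub continuous_const))).sub
          (continuous_const.mul hc)).sub ((continuous_const.mul Real.continuous_cos).mul
            continuous_const)
      have hev : ∀ᶠ x in nhds (Real.pi / 2), |F x| ≤ |F (Real.pi / 2)| + 1 := by
        have hca : ContinuousAt (fun x => |F x|) (Real.pi / 2) := hFc.abs.continuousAt
        have : ∀ᶠ x in nhds (Real.pi / 2), |F x| < |F (Real.pi / 2)| + 1 := by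
          have hopen : IsOpen {z : ℝ | |z| < |F (Real.pi / 2)| + 1} :=
            isOpen_lt continuous_abs continuous_const
        -- use hca tendsto
          have := hFc.continuousAt (x := Real.pi / 2)
          exact this (hopen.mem_nhds (by simp only [Set.mem_setOf_eq]; linarith))
        exact this.mono fun x hx => hx.le
      apply aux_bound_near h (|F (Real.pi / 2)| + 1)
      filter_upwards [hev] with x hx
      rw [hid x]
      exact hx
    · have hm : Measurable ψ := by
        have := hmeas.comp (MeasurableEquiv.Set.univ ℝ).symm.measurable
        exact this
      have hFm : Measurable F := by
        apply Measurable.div_const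
        exact (((hm.comp (measurable_id.add_const y)).add
          (hm.comp (measurable_id.sub measurable_const))).sub
          (measurable_const.mul hm)).sub ((measurable_const.mul
            Real.continuous_cos.measurable).mul measurable_const)
      exact aux_bound_of_measurable h F hadd hFm hid
  exact aux_linear_of_bounded h hadd hab hb

end AuxLemmas

theorem stmt_2 (d : ℝ → ℝ)
    (hd : ∀ x y : ℝ, d (x + y) = d x + d y)
    (hreg : RegularOn (fun x : ℝ => d (Real.cos x) + Real.sin x * d x) Set.univ) :
    ∃ χ : ℝ → ℝ, IsRealDerivation χ ∧ ∀ x : ℝ, d x = χ x + d 1 * x := by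
  have dsub : ∀ a b : ℝ, d (a - b) = d a - d b := by
    intro a b
    have h1 : d ((a - b) + b) = d (a - b) + d b := hd _ _
    rw [sub_add_cancel] at h1
    linarith
  set ψ : ℝ → ℝ := fun x => d (Real.cos x) + Real.sin x * d x with hψdef
  set c := d 1 with hc
  have key : ∀ v ∈ Set.Icc (-1 : ℝ) 1, ∀ u : ℝ,
      d (u * v) - u * d v - v * d u = -(c * (u * v)) := by
    intro v hv u
    obtain ⟨y, hy⟩ : ∃ y, Real.cos y = v := ⟨Real.arccos v, Real.cos_arccos hv.1 hv.2⟩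
    set h : ℝ → ℝ := fun u => d (u * Real.cos y) - u * d (Real.cos y) - Real.cos y * d u
      with hh
    have hadd : ∀ a b, h (a + b) = h a + h b := by
      intro a b
      simp only [hh]
      rw [add_mul, hd, hd]
      ring
    have hid : ∀ x, h (Real.cos x) =
        (ψ (x + y) + ψ (x - y) - 2 * Real.cos y * ψ x - 2 * Real.cos x * ψ y) / 2 := by
      intro x
      simp only [hh, hψdef]
      rw [Real.cos_add, Real.cos_sub, Real.sin_add, Real.sin_sub, dsub, hd, hd, dsub]
      ring
    have hlin := aux_key h ψ y hadd hreg hid u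
    have h1 : h 1 = -(Real.cos y * c) := by
      simp only [hh]
      rw [one_mul, one_mul]
      ring
    rw [h1] at hlin
    simp only [hh, hy] at hlin
    linear_combination hlin
  have keyall : ∀ u v : ℝ, d (u * v) - u * d v - v * d u = -(c * (u * v)) := by
    intro u v
    obtain ⟨n, hn⟩ := exists_nat_gt |v|
    have hn0 : 0 < (n : ℝ) := lt_of_le_of_lt (abs_nonneg v) hn
    have hmem : v / n ∈ Set.Icc (-1 : ℝ) 1 := by
      rw [Set.mem_Icc, ← abs_le, abs_div, abs_of_pos hn0]
      exact (div_le_one hn0).mpr hn.le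
    set g : ℝ → ℝ := fun w => d (u * w) - u * d w - w * d u with hg
    have gadd : ∀ a b, g (a + b) = g a + g b := by
      intro a b
      simp only [hg]
      rw [mul_add, hd, hd]
      ring
    have g0 : g 0 = 0 := by
      have := gadd 0 0
      simp only [add_zero] at this
      linarith
    have gnat : ∀ (m : ℕ) (w : ℝ), g (m * w) = m * g w := by
      intro m
      induction m with
      | zero => intro w; simpa using g0
      | succ m ih =>
          intro w
          push_cast
          have : ((m : ℝ) + 1) * w = m * w + w := by ring
          rw [this, gadd, ih]
          ring
    have hkey := key (v / n) hmem u
    have h2 : g v = n * g (v / n) := by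
      rw [← gnat]
      congr 1
      field_simp
    have h3 : g (v / n) = -(c * (u * (v / n))) := hkey
    have : g v = -(c * (u * v)) := by
      rw [h2, h3]
      field_simp
    simpa only [hg] using this
  refine ⟨fun x => d x - c * x, ⟨fun a b => ?_, fun a b => ?_⟩, fun x => by ring⟩
  · simp only [hd a b]; ring
  · have := keyall a b
    simp only
    linear_combination this
end

section
/- Let d : ℝ → ℝ be an additive function such that the mapping φ : ℝ → ℝ defined by φ(x) = d(sin(x)) − cos(x)·d(x) is regular (i.e., locally bounded, or continuous, or Lebesgue measurable). Then there exists a real derivation χ : ℝ → ℝ such that d(x) = χ(x) + d(1)·x for all x ∈ ℝ. -/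
open Real Set

/-- An additive function bounded near `0` is linear. -/
lemma additive_linear_of_bdd (g : ℝ → ℝ)
    (hg : ∀ x y : ℝ, g (x + y) = g x + g y)
    (hb : ∃ δ > (0:ℝ), ∃ C : ℝ, ∀ t : ℝ, |t| ≤ δ → |g t| ≤ C) :
    ∀ x : ℝ, g x = g 1 * x := by
  obtain ⟨δ, hδ, C, hC⟩ := hb
  have hg0 : g 0 = 0 := by have := hg 0 0; simp only [add_zero] at this; linarith
  have hC0 : 0 ≤ C := le_trans (by rw [hg0, abs_zero]) (hC 0 (by rw [abs_zero]; exact hδ.le))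
  have hnsmul : ∀ (n : ℕ) (u : ℝ), g ((n:ℝ) * u) = n * g u := by
    intro n
    induction n with
    | zero => simp [hg0]
    | succ n ih =>
      intro u
      have e : ((n+1:ℕ):ℝ) * u = (n:ℝ) * u + u := by push_cast; ring
      rw [e, hg, ih]; push_cast; ring
  have hrat : ∀ q : ℚ, g (q:ℝ) = q * g 1 := by
    intro q
    have := map_ratCast_smul (AddMonoidHom.mk' g hg) ℝ ℝ q 1
    simpa [smul_eq_mul] using this
  intro x
  set K : ℝ := C + |g 1| * δ with hK
  have hK0 : 0 ≤ K := by positivity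
  have bound : ∀ n : ℕ, 0 < n → |g x - g 1 * x| ≤ K / n := by
    intro n hn
    have hn' : (0:ℝ) < n := by exact_mod_cast hn
    obtain ⟨q, hq⟩ := exists_rat_near x (div_pos hδ hn')
    have e1 : g x = g (x - q) + g (q:ℝ) := by
      have := hg (x - q) q
      rw [sub_add_cancel] at this
      linarith
    have e3 : (n:ℝ) * g (x - q) = g ((n:ℝ) * (x - q)) := (hnsmul n _).symm
    have e4 : |(n:ℝ) * (x - q)| ≤ δ := by
      rw [abs_mul, abs_of_nonneg (le_of_lt hn')]
      calc (n:ℝ) * |x - (q:ℝ)| ≤ n * (δ / n) := by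
            exact mul_le_mul_of_nonneg_left hq.le (le_of_lt hn')
        _ = δ := by field_simp
    have e5 : |g ((n:ℝ) * (x - q))| ≤ C := hC _ e4
    have e6 : g x - g 1 * x = g ((n:ℝ)*(x - q)) / n - g 1 * (x - q) := by
      rw [e1, hrat]
      have : g (x - q) = g ((n:ℝ)*(x-q)) / n := by
        rw [eq_div_iff (ne_of_gt hn')]
        linarith
      rw [this]; ring
    have b1 : |g ((n:ℝ)*(x - q))| / n ≤ C / n := by gcongr
    have b2 : |g 1| * |x - (q:ℝ)| ≤ |g 1| * (δ / n) := by
      exact mul_le_mul_of_nonneg_left hq.le (abs_nonneg _)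
    rw [e6]
    calc |g ((n:ℝ)*(x - q)) / n - g 1 * (x - q)|
        ≤ |g ((n:ℝ)*(x - q)) / n| + |g 1 * (x - q)| := abs_sub _ _
      _ = |g ((n:ℝ)*(x - q))| / n + |g 1| * |x - (q:ℝ)| := by
          rw [abs_div, abs_mul, abs_of_nonneg (le_of_lt hn')]
      _ ≤ C / n + |g 1| * (δ / n) := add_le_add b1 b2
      _ = K / n := by rw [hK, add_div, mul_div_assoc]
  by_contra hne
  have ha : 0 < |g x - g 1 * x| := by
    rcases eq_or_ne (g x - g 1 * x) 0 with h | h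
    · exact absurd (by linarith [sub_eq_zero.mp h]) hne
    · exact abs_pos.mpr h
  obtain ⟨n, hn⟩ := exists_nat_gt (K / |g x - g 1 * x|)
  have hn0 : 0 < n := by
    by_contra h
    push_neg at h
    interval_cases n
    simp at hn
    exact absurd hn (not_lt.mpr (div_nonneg hK0 ha.le))
  have hn' : (0:ℝ) < n := by exact_mod_cast hn0
  have : K / n < |g x - g 1 * x| := by
    rw [div_lt_iff₀ hn']
    rw [div_lt_iff₀ ha] at hn
    linarith
  exact absurd (bound n hn0) (not_le.mpr this)

/-- If `g ∘ sin` is bounded near `0`, then `g` is bounded near `0`. -/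
lemma bdd_of_bdd_sin (g : ℝ → ℝ)
    (hb : ∃ δ > (0:ℝ), ∃ C : ℝ, ∀ x : ℝ, |x| ≤ δ → |g (Real.sin x)| ≤ C) :
    ∃ δ > (0:ℝ), ∃ C : ℝ, ∀ t : ℝ, |t| ≤ δ → |g t| ≤ C := by
  obtain ⟨δ, hδ, C, hC⟩ := hb
  set m : ℝ := min δ 1 with hm
  have hm0 : 0 < m := lt_min hδ one_pos
  have hm1 : m ≤ 1 := min_le_right _ _
  have hmδ : m ≤ δ := min_le_left _ _
  have hmpi : m ≤ π / 2 := hm1.trans (by linarith [Real.two_le_pi])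
  refine ⟨Real.sin m, Real.sin_pos_of_pos_of_lt_pi hm0
    (lt_of_le_of_lt hm1 (by linarith [Real.pi_gt_three])), C, ?_⟩
  intro t ht
  have hsm1 : Real.sin m ≤ 1 := Real.sin_le_one m
  have ht1 := abs_le.mp (ht.trans hsm1)
  have hst : Real.sin (Real.arcsin t) = t := Real.sin_arcsin ht1.1 ht1.2
  have hasm : Real.arcsin (Real.sin m) = m := Real.arcsin_sin (by linarith) hmpi
  have h1 : Real.arcsin t ≤ m := by
    rw [← hasm]
    exact Real.monotone_arcsin ((abs_le.mp ht).2)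
  have h2 : -m ≤ Real.arcsin t := by
    have : Real.arcsin (Real.sin (-m)) = -m := Real.arcsin_sin (by linarith) (by linarith)
    rw [← this]
    refine Real.monotone_arcsin ?_
    rw [Real.sin_neg]
    linarith [(abs_le.mp ht).1]
  have habs : |Real.arcsin t| ≤ δ := abs_le.mpr ⟨by linarith, by linarith⟩
  have := hC _ habs
  rwa [hst] at this

open scoped Pointwise in
/-- An additive function agreeing with a measurable function on `[0,1]` is bounded near `0`. -/
lemma bdd_of_measurable (g H : ℝ → ℝ)
    (hg : ∀ x y : ℝ, g (x + y) = g x + g y)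
    (hH : Measurable H) (heq : ∀ t ∈ Icc (0:ℝ) 1, g t = H t) :
    ∃ δ > (0:ℝ), ∃ C : ℝ, ∀ t : ℝ, |t| ≤ δ → |g t| ≤ C := by
  have hsub : ∀ a b : ℝ, g (a - b) = g a - g b := by
    intro a b
    have := hg (a - b) b
    rw [sub_add_cancel] at this
    linarith
  set E : ℕ → Set ℝ := fun n => Icc (0:ℝ) 1 ∩ {t | |H t| ≤ n} with hE
  have hEm : ∀ n, MeasurableSet (E n) :=
    fun n => measurableSet_Icc.inter (measurableSet_le hH.abs measurable_const)
  have hunion : Icc (0:ℝ) 1 ⊆ ⋃ n, E n := by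
    intro t htI
    obtain ⟨n, hn⟩ := exists_nat_ge (|H t|)
    exact Set.mem_iUnion.mpr ⟨n, htI, hn⟩
  have hpos : ∃ n, 0 < MeasureTheory.volume (E n) := by
    by_contra h
    push_neg at h
    have h0 : ∀ n, MeasureTheory.volume (E n) = 0 := fun n => le_antisymm (h n) zero_le
    have : MeasureTheory.volume (Icc (0:ℝ) 1) = 0 := by
      refine le_antisymm ?_ zero_le
      calc MeasureTheory.volume (Icc (0:ℝ) 1)
          ≤ MeasureTheory.volume (⋃ n, E n) := MeasureTheory.measure_mono hunion
        _ ≤ ∑' n, MeasureTheory.volume (E n) := MeasureTheory.measure_iUnion_le _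
        _ = 0 := by simp [h0]
    rw [Real.volume_Icc] at this
    norm_num at this
  obtain ⟨n, hn⟩ := hpos
  have hst := MeasureTheory.Measure.sub_mem_nhds_zero_of_addHaar_pos
    MeasureTheory.volume (E n) (hEm n) hn
  obtain ⟨ε, hε, hball⟩ := Metric.mem_nhds_iff.mp hst
  refine ⟨ε/2, by linarith, 2 * n, ?_⟩
  intro t ht
  have : t ∈ E n - E n := by
    apply hball
    rw [Metric.mem_ball, Real.dist_eq, sub_zero]
    linarith [abs_nonneg t]
  obtain ⟨a, ha, b, hb, hab⟩ := Set.mem_sub.mp this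
  rw [← hab, hsub, heq a ha.1, heq b hb.1]
  calc |H a - H b| ≤ |H a| + |H b| := abs_sub _ _
    _ ≤ 2 * n := by
      have := ha.2
      have := hb.2
      simp only [Set.mem_setOf_eq] at *
      linarith

theorem stmt_3 (d : ℝ → ℝ)
    (hd : ∀ x y : ℝ, d (x + y) = d x + d y)
    (hreg : RegularOn (fun x : ℝ => d (Real.sin x) - Real.cos x * d x) Set.univ) :
    ∃ χ : ℝ → ℝ, IsRealDerivation χ ∧ ∀ x : ℝ, d x = χ x + d 1 * x := by
  classical
  set φ : ℝ → ℝ := fun x => d (Real.sin x) - Real.cos x * d x with hφ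
  have hd0 : d 0 = 0 := by have := hd 0 0; simp at this; linarith
  have hdsub : ∀ a b : ℝ, d (a - b) = d a - d b := by
    intro a b
    have := hd (a - b) b
    rw [sub_add_cancel] at this
    linarith
  -- key pointwise identity
  have hA : ∀ y x : ℝ, d (Real.cos y * Real.sin x) - Real.cos y * d (Real.sin x)
      = (φ (x + y) + φ (x - y) - 2 * Real.cos y * φ x) / 2
        - Real.sin x * Real.sin y * d y := by
    intro y x
    have e : Real.sin (x+y) + Real.sin (x-y)
        = Real.cos y * Real.sin x + Real.cos y * Real.sin x := by
      rw [Real.sin_add, Real.sin_sub]; ring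
    have hsum : d (Real.sin (x+y)) + d (Real.sin (x-y))
        = d (Real.cos y * Real.sin x) + d (Real.cos y * Real.sin x) := by
      rw [← hd, e, hd]
    simp only [hφ]
    rw [Real.cos_add, Real.cos_sub, hd x y, hdsub x y]
    linear_combination -hsum / 2
  -- reduce regularity to two cases
  have hcases : LocallyBoundedOn φ univ ∨ Measurable φ := by
    rcases hreg with h | h | h
    · exact Or.inl h
    · left
      intro x _
      have hc : Continuous φ := continuousOn_univ.mp h
      refine ⟨|φ x| + 1, ?_⟩
      rw [nhdsWithin_univ]
      exact ((hc.abs.tendsto x).eventually_le_const (lt_add_one _))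
    · right
      have hm2 : Measurable fun x : ℝ => (⟨x, Set.mem_univ x⟩ : (Set.univ : Set ℝ)) :=
        measurable_id.subtype_mk
      have hm3 : Measurable fun x : ℝ => Set.univ.restrict φ ⟨x, Set.mem_univ x⟩ := h.comp hm2
      exact hm3
  -- key multiplicative relation for c ∈ [-1,1]
  have hkey : ∀ c : ℝ, -1 ≤ c → c ≤ 1 → ∀ t : ℝ,
      d (c * t) = c * d t + (d c - c * d 1) * t := by
    intro c hc1 hc2
    set y : ℝ := Real.arccos c with hy
    have hcy : Real.cos y = c := Real.cos_arccos hc1 hc2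
    have hgadd : ∀ u v : ℝ, d (c * (u + v)) - c * d (u + v)
        = (d (c * u) - c * d u) + (d (c * v) - c * d v) := by
      intro u v
      rw [mul_add, hd, hd]
      ring
    have hAy : ∀ x : ℝ, d (c * Real.sin x) - c * d (Real.sin x)
        = (φ (x + y) + φ (x - y) - 2 * c * φ x) / 2 - Real.sin x * Real.sin y * d y := by
      intro x
      have := hA y x
      rwa [hcy] at this
    have hbdd : ∃ δ > (0:ℝ), ∃ C : ℝ, ∀ t : ℝ, |t| ≤ δ → |d (c * t) - c * d t| ≤ C := by
      rcases hcases with hlb | hm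
      · -- locally bounded case
        obtain ⟨C1, hC1⟩ := hlb y (mem_univ y)
        obtain ⟨C2, hC2⟩ := hlb (-y) (mem_univ (-y))
        obtain ⟨C3, hC3⟩ := hlb 0 (mem_univ 0)
        rw [nhdsWithin_univ] at hC1 hC2 hC3
        have t1 : Filter.Tendsto (fun x : ℝ => x + y) (nhds 0) (nhds y) := by
          simpa using (continuous_add_right y).tendsto (0:ℝ)
        have t2 : Filter.Tendsto (fun x : ℝ => x - y) (nhds 0) (nhds (-y)) := by
          simpa using (continuous_sub_right y).tendsto (0:ℝ)
        have h1 := t1.eventually hC1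
        have h2 := t2.eventually hC2
        have hev : ∀ᶠ x in nhds (0:ℝ),
            |d (c * Real.sin x) - c * d (Real.sin x)|
              ≤ (C1 + C2 + 2 * |c| * C3) / 2 + |Real.sin y * d y| := by
          filter_upwards [h1, h2, hC3] with x hx1 hx2 hx3
          rw [hAy x]
          calc |(φ (x + y) + φ (x - y) - 2 * c * φ x) / 2 - Real.sin x * Real.sin y * d y|
              ≤ |(φ (x + y) + φ (x - y) - 2 * c * φ x) / 2| + |Real.sin x * Real.sin y * d y| :=
                abs_sub _ _
            _ ≤ (C1 + C2 + 2 * |c| * C3) / 2 + |Real.sin y * d y| := by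
                have e1 : |φ (x+y) + φ (x-y) - 2*c*φ x| ≤ C1 + C2 + 2 * |c| * C3 := by
                  calc |φ (x+y) + φ (x-y) - 2*c*φ x|
                      ≤ |φ (x+y) + φ (x-y)| + |2*c*φ x| := abs_sub _ _
                    _ ≤ |φ (x+y)| + |φ (x-y)| + 2 * |c| * |φ x| := by
                        rw [abs_mul, abs_mul, abs_two]
                        have := abs_add_le (φ (x+y)) (φ (x-y))
                        linarith
                    _ ≤ C1 + C2 + 2 * |c| * C3 := by
                        have h3 : 2 * |c| * |φ x| ≤ 2 * |c| * C3 :=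
                          mul_le_mul_of_nonneg_left hx3 (by positivity)
                        linarith
                have e2 : |Real.sin x * Real.sin y * d y| ≤ |Real.sin y * d y| := by
                  rw [mul_assoc, abs_mul]
                  have : |Real.sin x| ≤ 1 := Real.abs_sin_le_one x
                  nlinarith [abs_nonneg (Real.sin y * d y)]
                rw [abs_div, abs_two]
                have e3 : |φ (x+y) + φ (x-y) - 2 * c * φ x| / 2
                    ≤ (C1 + C2 + 2 * |c| * C3) / 2 := by linarith
                linarith
        obtain ⟨ε, hε, hb⟩ := Metric.eventually_nhds_iff.mp hev
        apply bdd_of_bdd_sin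
        refine ⟨ε/2, by linarith, (C1 + C2 + 2 * |c| * C3) / 2 + |Real.sin y * d y|, ?_⟩
        intro x hx
        apply hb
        rw [Real.dist_eq, sub_zero]
        linarith [abs_nonneg x]
      · -- measurable case
        have m1 : Measurable fun x : ℝ => φ (x + y) := hm.comp (measurable_add_const y)
        have m2 : Measurable fun x : ℝ => φ (x - y) := hm.comp (measurable_sub_const y)
        have m3 : Measurable fun x : ℝ => 2 * c * φ x := hm.const_mul (2*c)
        have msin : Measurable fun x : ℝ => Real.sin x * Real.sin y * d y :=
          ((Real.continuous_sin.mul continuous_const).mul continuous_const).measurable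
        have mh : Measurable fun x : ℝ =>
            (φ (x + y) + φ (x - y) - 2 * c * φ x) / 2 - Real.sin x * Real.sin y * d y :=
          (((m1.add m2).sub m3).div_const 2).sub msin
        have mH : Measurable fun t : ℝ =>
            (φ (Real.arcsin t + y) + φ (Real.arcsin t - y) - 2 * c * φ (Real.arcsin t)) / 2
              - Real.sin (Real.arcsin t) * Real.sin y * d y :=
          mh.comp Real.continuous_arcsin.measurable
        refine bdd_of_measurable _ _ hgadd mH ?_
        intro t htI
        have h1 : -1 ≤ t := by linarith [htI.1]
        have h2 : t ≤ 1 := htI.2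
        have h3 := hAy (Real.arcsin t)
        rw [Real.sin_arcsin h1 h2] at h3
        rw [Real.sin_arcsin h1 h2]
        exact h3
    have := additive_linear_of_bdd (fun t => d (c * t) - c * d t) hgadd hbdd
    intro t
    have h := this t
    simp only [mul_one] at h
    linarith [h]
  -- natural multiples
  have hdnat : ∀ (n : ℕ) (x : ℝ), d ((n:ℝ) * x) = n * d x := by
    intro n
    induction n with
    | zero => simp [hd0]
    | succ n ih =>
      intro x
      have e : ((n+1:ℕ):ℝ) * x = (n:ℝ) * x + x := by push_cast; ring
      rw [e, hd, ih]; push_cast; ring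
  -- full Leibniz-type rule
  have hB : ∀ a b : ℝ, d (a * b) = a * d b + b * d a - a * b * d 1 := by
    intro a b
    set n : ℕ := ⌈|a|⌉₊ + 1 with hn
    have hn' : (0:ℝ) < n := by positivity
    have han : |a| ≤ n := by
      calc |a| ≤ (⌈|a|⌉₊ : ℝ) := Nat.le_ceil _
        _ ≤ n := by rw [hn]; push_cast; linarith
    have ha1 : -1 ≤ a / n := by
      rw [le_div_iff₀ hn']
      have := (abs_le.mp han).1
      linarith
    have ha2 : a / n ≤ 1 := by
      rw [div_le_one hn']
      exact (abs_le.mp han).2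
    have h1 := hkey (a/n) ha1 ha2 b
    have e : (n:ℝ) * (a / n) = a := by field_simp
    have h3 := hdnat n ((a/n) * b)
    rw [← mul_assoc, e] at h3
    have h4 := hdnat n (a/n)
    rw [e] at h4
    rw [h3, h1, h4]
    linear_combination (d b - b * d 1) * e
  refine ⟨fun x => d x - d 1 * x, ⟨?_, ?_⟩, ?_⟩
  · intro x y
    show d (x + y) - d 1 * (x + y) = (d x - d 1 * x) + (d y - d 1 * y)
    rw [hd]
    ring
  · intro x y
    show d (x * y) - d 1 * (x * y) = x * (d y - d 1 * y) + y * (d x - d 1 * x)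
    rw [hB x y]
    ring
  · intro x
    show d x = (d x - d 1 * x) + d 1 * x
    ring
end

section
/- Let d : ℝ → ℝ be an additive function such that the mapping φ : ℝ → ℝ defined by φ(x) = d(cosh(x)) − sinh(x)·d(x) is regular (i.e., locally bounded, or continuous, or Lebesgue measurable). Then there exists a real derivation χ : ℝ → ℝ such that d(x) = χ(x) + d(1)·x for all x ∈ ℝ. -/
open Real Set MeasureTheory Filter Topology

/- ### Auxiliary material for the proof -/

/-- The quadratic defect of an additive function, with linear part removed. -/
noncomputable def Rq (d : ℝ → ℝ) (x : ℝ) : ℝ := d (x * x) - 2 * x * d x + d 1 * x ^ 2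

/-- The regular comparison function, built from `φ(2t)`, `φ(t)`. -/
noncomputable def Psi (d : ℝ → ℝ) (t : ℝ) : ℝ :=
  ((d (Real.cosh (2*t)) - Real.sinh (2*t) * d (2*t))
    - 4 * Real.cosh t * (d (Real.cosh t) - Real.sinh t * d t) + d 1) / 2
    + d 1 * Real.cosh t ^ 2

section Aux
variable {d : ℝ → ℝ}

lemma hdneg (hd : ∀ x y : ℝ, d (x + y) = d x + d y) (a : ℝ) : d (-a) = - d a := by
  have h0 : d 0 = 0 := by have := hd 0 0; simp at this; linarith
  have h := hd a (-a); simp [h0] at h; linarith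

lemma hpar (hd : ∀ x y : ℝ, d (x + y) = d x + d y) (x y : ℝ) :
    Rq d (x + y) + Rq d (x - y) = 2 * Rq d x + 2 * Rq d y := by
  have h1 : d ((x + y) * (x + y)) = d (x * x) + d (y * y) + d (x * y) + d (x * y) := by
    rw [show (x + y) * (x + y) = x * x + y * y + x * y + x * y by ring, hd, hd, hd]
  have h2 : d ((x - y) * (x - y)) = d (x * x) + d (y * y) + -d (x * y) + -d (x * y) := by
    rw [show (x - y) * (x - y) = x * x + y * y + -(x * y) + -(x * y) by ring, hd, hd, hd,
      hdneg hd]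
  have h3 : d (x - y) = d x - d y := by
    rw [show x - y = x + -y by ring, hd, hdneg hd]; ring
  simp only [Rq, h1, h2, h3, hd x y]
  ring

lemma hper (hd : ∀ x y : ℝ, d (x + y) = d x + d y) : Function.Periodic (Rq d) 1 := by
  intro x
  have h1 : d ((x + 1) * (x + 1)) = d (x * x) + d x + d x + d 1 := by
    rw [show (x + 1) * (x + 1) = x * x + x + x + 1 by ring, hd, hd, hd]
  simp only [Rq, h1, hd x 1]
  ring

lemma hdouble (hd : ∀ x y : ℝ, d (x + y) = d x + d y) (x : ℝ) : Rq d (2 * x) = 4 * Rq d x := by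
  have h1 : d (2 * x * (2 * x)) = d (x * x) + d (x * x) + d (x * x) + d (x * x) := by
    rw [show 2 * x * (2 * x) = x * x + x * x + x * x + x * x by ring, hd, hd, hd]
  have h2 : d (2 * x) = d x + d x := by rw [show 2 * x = x + x by ring, hd]
  simp only [Rq, h1, h2]
  ring

lemma hpow (hd : ∀ x y : ℝ, d (x + y) = d x + d y) (k : ℕ) (x : ℝ) :
    Rq d (2 ^ k * x) = 4 ^ k * Rq d x := by
  induction k generalizing x with
  | zero => simp
  | succ n ih =>
    have : (2:ℝ) ^ (n+1) * x = 2 ^ n * (2 * x) := by ring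
    rw [this, ih, hdouble hd]
    ring

lemma keyglobal (hd : ∀ x y : ℝ, d (x + y) = d x + d y)
    {M : ℝ} (hb : ∀ x : ℝ, |Rq d x| ≤ M) : ∀ x, Rq d x = 0 := by
  intro x
  by_contra hne
  have habs : 0 < |Rq d x| := abs_pos.mpr hne
  obtain ⟨j, hj⟩ := pow_unbounded_of_one_lt (M / |Rq d x|) (by norm_num : (1:ℝ) < 4)
  have h4 : (0:ℝ) < 4 ^ j := by positivity
  have hb' := hb (2 ^ j * x)
  rw [hpow hd j x, abs_mul, abs_of_pos h4] at hb'
  rw [div_lt_iff₀ habs] at hj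
  linarith

lemma keyI (hd : ∀ x y : ℝ, d (x + y) = d x + d y)
    {a L M : ℝ} (hL : 0 < L) (hb : ∀ x ∈ Icc a (a + L), |Rq d x| ≤ M) :
    ∀ x, Rq d x = 0 := by
  obtain ⟨k, hk⟩ := pow_unbounded_of_one_lt (1 / L) (by norm_num : (1:ℝ) < 2)
  have h2k : (0:ℝ) < 2 ^ k := by positivity
  have hkL : 1 ≤ 2 ^ k * L := by
    rw [div_lt_iff₀ hL] at hk
    nlinarith
  apply keyglobal hd (M := 4 ^ k * M)
  intro y
  obtain ⟨w, hw, hwy⟩ := (hper hd).exists_mem_Ico one_pos y (2 ^ k * a)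
  have hw2 : w / 2 ^ k ∈ Icc a (a + L) := by
    constructor
    · rw [le_div_iff₀ h2k]; linarith [hw.1]
    · rw [div_le_iff₀ h2k]
      have := hw.2
      nlinarith
  have hws : Rq d w = 4 ^ k * Rq d (w / 2 ^ k) := by
    rw [← hpow hd k (w / 2 ^ k)]
    congr 1
    field_simp
  rw [hwy, hws, abs_mul, abs_of_pos (by positivity : (0:ℝ) < 4 ^ k)]
  have h4 : (0:ℝ) < 4 ^ k := by positivity
  have := hb _ hw2
  nlinarith

lemma conclusion (hd : ∀ x y : ℝ, d (x + y) = d x + d y)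
    (hR0 : ∀ x, Rq d x = 0) :
    ∃ χ : ℝ → ℝ, IsRealDerivation χ ∧ ∀ x : ℝ, d x = χ x + d 1 * x := by
  refine ⟨fun x => d x - d 1 * x, ⟨fun x y => by dsimp only; rw [hd]; ring, ?_⟩,
    fun x => by ring⟩
  intro x y
  dsimp only
  have hsq : ∀ z : ℝ, d (z * z) = 2 * z * d z - d 1 * z ^ 2 := by
    intro z
    have := hR0 z
    simp only [Rq] at this
    linarith
  have h1 : d ((x + y) * (x + y)) = d (x * x) + d (y * y) + d (x * y) + d (x * y) := by
    rw [show (x + y) * (x + y) = x * x + y * y + x * y + x * y by ring, hd, hd, hd]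
  have h2 := hsq (x + y)
  rw [h1, hsq x, hsq y, hd x y] at h2
  have hxy : d (x * y) = x * d y + y * d x - d 1 * (x * y) := by nlinarith [h2]
  rw [hxy]
  ring

lemma hpsi (hd : ∀ x y : ℝ, d (x + y) = d x + d y) (t : ℝ) :
    Rq d (Real.cosh t) = Psi d t := by
  have hc2 : Real.cosh (2*t) = Real.cosh t * Real.cosh t + Real.cosh t * Real.cosh t + (-1) := by
    rw [Real.cosh_two_mul, Real.sinh_sq]; ring
  have h1 : d (Real.cosh (2*t)) = d (Real.cosh t * Real.cosh t) + d (Real.cosh t * Real.cosh t)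
      + -(d 1) := by rw [hc2, hd, hd, hdneg hd]
  have h2 : d (2*t) = d t + d t := by rw [show 2*t = t+t by ring, hd]
  simp only [Rq, Psi]
  rw [h1, h2, Real.sinh_two_mul]
  ring

lemma boundIcc (hd : ∀ x y : ℝ, d (x + y) = d x + d y) {t1 t2 C : ℝ}
    (h12 : t1 ≤ t2) (hb : ∀ t ∈ Icc t1 t2, |Psi d t| ≤ C) :
    ∀ u ∈ Icc (Real.cosh t1) (Real.cosh t2), |Rq d u| ≤ C := by
  intro u hu
  have hsub : Icc (Real.cosh t1) (Real.cosh t2) ⊆ Real.cosh '' Icc t1 t2 :=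
    intermediate_value_Icc h12 Real.continuous_cosh.continuousOn
  obtain ⟨t, ht, hct⟩ := hsub hu
  rw [← hct, hpsi hd]
  exact hb t ht

lemma psi_eq (d : ℝ → ℝ) :
    Psi d = fun t => ((fun x : ℝ => d (Real.cosh x) - Real.sinh x * d x) (2*t)
      - 4 * Real.cosh t * ((fun x : ℝ => d (Real.cosh x) - Real.sinh x * d x) t) + d 1) / 2
      + d 1 * Real.cosh t ^ 2 := rfl

end Aux

section Aux2
variable {d : ℝ → ℝ}

lemma measbound {P : ℝ → ℝ} (hm : Measurable P) (hperi : Function.Periodic P 1)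
    (hpara : ∀ x y, P (x + y) + P (x - y) = 2 * P x + 2 * P y) :
    ∃ M : ℝ, ∀ t ∈ Icc (0:ℝ) 1, |P t| ≤ M := by
  set T : ℕ → Set ℝ := fun n => Icc (0:ℝ) 2 ∩ {x | (n:ℝ) < |P x|} with hT
  have hTm : ∀ n, MeasurableSet (T n) := fun n =>
    measurableSet_Icc.inter (measurableSet_lt measurable_const hm.abs)
  have hTanti : Antitone T := by
    intro m n hmn x hx
    simp only [hT, mem_inter_iff, mem_setOf_eq] at hx ⊢
    exact ⟨hx.1, lt_of_le_of_lt (by exact_mod_cast hmn) hx.2⟩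
  have hTempty : ⋂ n, T n = ∅ := by
    rw [eq_empty_iff_forall_notMem]
    intro x hx
    simp only [mem_iInter] at hx
    obtain ⟨n, hn⟩ := exists_nat_gt |P x|
    exact absurd (hx n).2 (not_lt.mpr hn.le)
  have htend : Tendsto (volume ∘ T) atTop (𝓝 0) := by
    have h := tendsto_measure_iInter_atTop (μ := volume) (fun n => (hTm n).nullMeasurableSet)
      hTanti ⟨0, by
        refine ne_top_of_le_ne_top ?_ (measure_mono inter_subset_left)
        rw [Real.volume_Icc]; exact ENNReal.ofReal_ne_top⟩
    rw [hTempty, measure_empty] at h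
    exact h
  obtain ⟨n, hn⟩ : ∃ n, volume (T n) < ENNReal.ofReal (1/8) :=
    (htend.eventually_lt_const (ENNReal.ofReal_pos.mpr (by norm_num))).exists
  refine ⟨2*n + 2*n + n, fun t ht => ?_⟩
  set S := T n with hS
  have hSm : MeasurableSet S := hTm n
  have hgood : ∃ u ∈ Icc (1/2:ℝ) 1, u ∉ S ∧ (t + 1 - u) ∉ S ∧ (2*u - t) ∉ S := by
    by_contra hcon
    push_neg at hcon
    have hsub : Icc (1/2:ℝ) 1 ⊆ S ∪ (fun u => t + 1 - u) ⁻¹' S ∪ (fun u => 2*u - t) ⁻¹' S := by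
      intro u hu
      rcases em (u ∈ S) with h | h
      · exact Or.inl (Or.inl h)
      rcases em ((t + 1 - u) ∈ S) with h2 | h2
      · exact Or.inl (Or.inr h2)
      exact Or.inr (hcon u hu h h2)
    have hv2 : volume ((fun u : ℝ => t + 1 - u) ⁻¹' S) = volume S := by
      have hcomp : (fun u : ℝ => t + 1 - u) = (fun w : ℝ => (t+1) + w) ∘ (Neg.neg : ℝ → ℝ) := by
        funext u; simp [Function.comp]; ring
      rw [hcomp, preimage_comp, Measure.measure_preimage_neg, measure_preimage_add]
    have hv3 : volume ((fun u : ℝ => 2*u - t) ⁻¹' S) ≤ volume S := by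
      have hcomp : (fun u : ℝ => 2*u - t) = (fun w : ℝ => w + (-t)) ∘ (fun u : ℝ => 2*u) := by
        funext u; simp [Function.comp]; ring
      rw [hcomp, preimage_comp, Real.volume_preimage_mul_left two_ne_zero,
        measure_preimage_add_right]
      calc ENNReal.ofReal |2⁻¹| * volume S ≤ 1 * volume S := by
            apply mul_le_mul_left
            exact ENNReal.ofReal_le_one.mpr (by rw [abs_le]; constructor <;> norm_num)
        _ = volume S := one_mul _
    have hle : volume (Icc (1/2:ℝ) 1) ≤ volume S + volume S + volume S := by
      calc volume (Icc (1/2:ℝ) 1)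
          ≤ volume (S ∪ (fun u => t + 1 - u) ⁻¹' S ∪ (fun u => 2*u - t) ⁻¹' S) :=
            measure_mono hsub
        _ ≤ volume (S ∪ (fun u => t + 1 - u) ⁻¹' S) + volume ((fun u => 2*u - t) ⁻¹' S) :=
            measure_union_le _ _
        _ ≤ (volume S + volume ((fun u => t + 1 - u) ⁻¹' S)) + volume ((fun u => 2*u - t) ⁻¹' S) :=
            add_le_add_left (measure_union_le _ _) _
        _ ≤ volume S + volume S + volume S := by rw [hv2]; exact add_le_add_right hv3 _
    have hstrict : volume S + volume S + volume S <
        ENNReal.ofReal (1/8) + ENNReal.ofReal (1/8) + ENNReal.ofReal (1/8) :=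
      ENNReal.add_lt_add (ENNReal.add_lt_add hn hn) hn
    have hIcc : volume (Icc (1/2:ℝ) 1) = ENNReal.ofReal (1/2) := by
      rw [Real.volume_Icc]; norm_num
    have hsum : ENNReal.ofReal (1/8) + ENNReal.ofReal (1/8) + ENNReal.ofReal (1/8)
        ≤ ENNReal.ofReal (1/2) := by
      rw [← ENNReal.ofReal_add (by norm_num) (by norm_num),
        ← ENNReal.ofReal_add (by norm_num) (by norm_num)]
      exact ENNReal.ofReal_le_ofReal (by norm_num)
    rw [hIcc] at hle
    exact absurd (lt_of_le_of_lt hle (lt_of_lt_of_le hstrict hsum)) (lt_irrefl _)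
  obtain ⟨u, hu, hu1, hu2, hu3⟩ := hgood
  have hnotS : ∀ x : ℝ, x ∈ Icc (0:ℝ) 2 → x ∉ S → |P x| ≤ n := by
    intro x hx hxS
    by_contra hc
    exact hxS ⟨hx, not_le.mp hc⟩
  have b1 : |P u| ≤ n := hnotS u ⟨by linarith [hu.1], by linarith [hu.2]⟩ hu1
  have b2 : |P (t + 1 - u)| ≤ n :=
    hnotS _ ⟨by linarith [ht.1, hu.2], by linarith [ht.2, hu.1]⟩ hu2
  have b3 : |P (2*u - t)| ≤ n :=
    hnotS _ ⟨by linarith [hu.1, ht.2], by linarith [hu.2, ht.1]⟩ hu3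
  have e := hpara u (t - u)
  rw [show u + (t - u) = t by ring, show u - (t - u) = 2*u - t by ring] at e
  have eper : P (t - u) = P (t + 1 - u) := by
    have h := hperi (t - u)
    rw [show t - u + 1 = t + 1 - u by ring] at h
    exact h.symm
  rw [eper] at e
  have e1 := abs_le.mp b1
  have e2 := abs_le.mp b2
  have e3 := abs_le.mp b3
  exact abs_le.mpr ⟨by linarith, by linarith⟩

lemma rq_measurable (hd : ∀ x y : ℝ, d (x + y) = d x + d y)
    (hφm : Measurable (fun x : ℝ => d (Real.cosh x) - Real.sinh x * d x)) :
    Measurable (Rq d) := by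
  have hψm : Measurable (Psi d) := by
    rw [psi_eq d]
    exact ((((hφm.comp (measurable_id.const_mul 2)).sub
      ((measurable_const.mul Real.measurable_cosh).mul hφm)).add
      measurable_const).div_const 2).add
      (measurable_const.mul (Real.measurable_cosh.pow_const 2))
  set g : ℝ → ℝ := fun u => Real.log (u + Real.sqrt (u^2 - 1)) with hg
  have hgm : Measurable g :=
    Real.measurable_log.comp (measurable_id.add
      (Real.continuous_sqrt.measurable.comp ((measurable_id.pow_const 2).sub measurable_const)))
  have hcoshg : ∀ u : ℝ, 1 ≤ u → Real.cosh (g u) = u := by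
    intro u hu
    have h1 : (0:ℝ) ≤ u^2 - 1 := by nlinarith
    have hs : Real.sqrt (u^2-1) ^ 2 = u^2 - 1 := Real.sq_sqrt h1
    have hsnn : 0 ≤ Real.sqrt (u^2-1) := Real.sqrt_nonneg _
    have hv : 0 < u + Real.sqrt (u^2-1) := by nlinarith
    simp only [hg]
    rw [Real.cosh_eq, Real.exp_log hv, Real.exp_neg, Real.exp_log hv]
    have hinv : (u + Real.sqrt (u^2-1))⁻¹ = u - Real.sqrt (u^2-1) :=
      inv_eq_of_mul_eq_one_right (by nlinarith [hs])
    rw [hinv]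
    ring
  have hrep : Rq d = fun x => Psi d (g (Int.fract x + 1)) := by
    funext x
    have hfr0 : 0 ≤ Int.fract x := Int.fract_nonneg x
    have e1 : Rq d (Int.fract x) = Rq d x := by
      have h2 := (hper hd).sub_zsmul_eq (x := x) ⌊x⌋
      rw [zsmul_eq_mul, mul_one, Int.self_sub_floor] at h2
      exact h2
    have e2 : Rq d (Int.fract x + 1) = Rq d (Int.fract x) := hper hd (Int.fract x)
    have e3 : Rq d (Int.fract x + 1) = Psi d (g (Int.fract x + 1)) := by
      conv_lhs => rw [← hcoshg (Int.fract x + 1) (by linarith)]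
      exact hpsi hd _
    rw [← e1, ← e2, e3]
  rw [hrep]
  exact hψm.comp (hgm.comp (measurable_fract.add measurable_const))

end Aux2

section Branches
variable {d : ℝ → ℝ}

lemma branch_cont (hd : ∀ x y : ℝ, d (x + y) = d x + d y)
    (hφc : Continuous (fun x : ℝ => d (Real.cosh x) - Real.sinh x * d x)) :
    ∃ a L M : ℝ, 0 < L ∧ ∀ x ∈ Icc a (a + L), |Rq d x| ≤ M := by
  have hψc : Continuous (Psi d) := by
    rw [psi_eq d]
    exact ((((hφc.comp (continuous_const.mul continuous_id)).sub
      ((continuous_const.mul Real.continuous_cosh).mul hφc)).add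
      continuous_const).div_const 2).add
      (continuous_const.mul (Real.continuous_cosh.pow 2))
  obtain ⟨C, hC⟩ := isCompact_Icc.exists_bound_of_continuousOn
    (s := Icc (1:ℝ) 2) hψc.continuousOn
  refine ⟨Real.cosh 1, Real.cosh 2 - Real.cosh 1, C, ?_, ?_⟩
  · have h : Real.cosh 1 < Real.cosh 2 := by
      rw [Real.cosh_lt_cosh, abs_of_pos one_pos, abs_of_pos (by norm_num : (0:ℝ) < 2)]
      norm_num
    linarith
  · intro x hx
    rw [show Real.cosh 1 + (Real.cosh 2 - Real.cosh 1) = Real.cosh 2 by ring] at hx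
    exact boundIcc hd (by norm_num)
      (fun t ht => by simpa [Real.norm_eq_abs] using hC t ht) x hx

lemma absbound {A q B dd C1 C2 K M2 : ℝ} (b1 : -C2 ≤ A) (b2 : A ≤ C2)
    (hq1 : q ≤ K*C1) (hq2 : -(K*C1) ≤ q) (hd1a : dd ≤ M2) (hd1b : -M2 ≤ dd)
    (hB1 : B ≤ M2*K^2) (hB2 : -(M2*K^2) ≤ B) :
    |(A - 4*q + dd)/2 + B| ≤ (C2 + 4*(K*C1) + M2)/2 + M2*K^2 := by
  rw [abs_le]
  constructor <;> linarith

lemma branch_lb (hd : ∀ x y : ℝ, d (x + y) = d x + d y)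
    (hlb : LocallyBoundedOn (fun x : ℝ => d (Real.cosh x) - Real.sinh x * d x) univ) :
    ∃ a L M : ℝ, 0 < L ∧ ∀ x ∈ Icc a (a + L), |Rq d x| ≤ M := by
  set φf : ℝ → ℝ := fun x : ℝ => d (Real.cosh x) - Real.sinh x * d x with hφf
  obtain ⟨C1, h1⟩ := hlb 1 (mem_univ 1)
  obtain ⟨C2, h2⟩ := hlb 2 (mem_univ 2)
  rw [nhdsWithin_univ, Metric.eventually_nhds_iff] at h1 h2
  obtain ⟨ε1, hε1, h1⟩ := h1
  obtain ⟨ε2, hε2, h2⟩ := h2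
  have hC1 : 0 ≤ C1 :=
    le_trans (abs_nonneg _) (h1 (show dist (1:ℝ) 1 < ε1 by simpa using hε1))
  set r := min (ε1/2) (ε2/4) with hr
  have hrpos : 0 < r := lt_min (by linarith) (by linarith)
  have hr1 : r < ε1 := lt_of_le_of_lt (min_le_left _ _) (by linarith)
  have hr2 : 2*r < ε2 := by
    have := min_le_right (ε1/2) (ε2/4)
    have : r ≤ ε2/4 := this
    linarith
  obtain ⟨K, hK⟩ : ∃ K : ℝ, K = Real.cosh (1 + r) := ⟨_, rfl⟩
  have hbound : ∀ t ∈ Icc (1:ℝ) (1+r),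
      |Psi d t| ≤ (C2 + 4*K*C1 + |d 1|)/2 + |d 1| * K^2 := by
    intro t ht
    have ht1 := ht.1
    have ht2 := ht.2
    have hφt : |φf t| ≤ C1 := by
      apply h1
      rw [Real.dist_eq, abs_of_nonneg (by linarith)]
      linarith
    have hφ2t : |φf (2*t)| ≤ C2 := by
      apply h2
      rw [Real.dist_eq, abs_of_nonneg (by linarith)]
      linarith
    have hcosh1 : 1 ≤ Real.cosh t := Real.one_le_cosh t
    have hcoshK : Real.cosh t ≤ K := by
      rw [hK]
      rw [Real.cosh_le_cosh, abs_of_nonneg (by linarith), abs_of_nonneg (by linarith)]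
      linarith
    have hPsi : Psi d t = (φf (2*t) - 4*Real.cosh t*(φf t) + d 1)/2
        + d 1 * Real.cosh t^2 := rfl
    rw [hPsi]
    obtain ⟨a1, a2⟩ := abs_le.mp hφt
    obtain ⟨b1, b2⟩ := abs_le.mp hφ2t
    have hcoshnn : (0:ℝ) ≤ Real.cosh t := by linarith
    have hq1 : Real.cosh t * φf t ≤ K * C1 := by
      calc Real.cosh t * φf t ≤ Real.cosh t * C1 := mul_le_mul_of_nonneg_left a2 hcoshnn
        _ ≤ K * C1 := mul_le_mul_of_nonneg_right hcoshK hC1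
    have hq2 : -(K * C1) ≤ Real.cosh t * φf t := by
      have := mul_le_mul_of_nonneg_left (neg_le_neg a1) hcoshnn
      have h' : Real.cosh t * C1 ≤ K * C1 := mul_le_mul_of_nonneg_right hcoshK hC1
      nlinarith
    have hsq1 : Real.cosh t^2 ≤ K^2 := by nlinarith
    have hd1a := le_abs_self (d 1)
    have hd1b := neg_abs_le (d 1)
    have hB1 : d 1 * Real.cosh t ^ 2 ≤ |d 1| * K^2 := by
      calc d 1 * Real.cosh t ^ 2 ≤ |d 1| * Real.cosh t ^ 2 :=
            mul_le_mul_of_nonneg_right hd1a (sq_nonneg _)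
        _ ≤ |d 1| * K ^ 2 := mul_le_mul_of_nonneg_left hsq1 (abs_nonneg _)
    have hB2 : -(|d 1| * K^2) ≤ d 1 * Real.cosh t ^ 2 := by
      have hc1 : -(|d 1|) * Real.cosh t ^2 ≤ d 1 * Real.cosh t ^ 2 :=
        mul_le_mul_of_nonneg_right hd1b (sq_nonneg _)
      have hc2 : -(|d 1|) * K^2 ≤ -(|d 1|) * Real.cosh t ^2 := by
        nlinarith [abs_nonneg (d 1)]
      nlinarith
    have hE : (φf (2*t) - 4*Real.cosh t*(φf t) + d 1)/2 + d 1 * Real.cosh t^2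
        = (φf (2*t) - 4*(Real.cosh t*(φf t)) + d 1)/2 + d 1 * Real.cosh t^2 := by ring
    have hE2 : (C2 + 4*K*C1 + |d 1|)/2 + |d 1| * K^2
        = (C2 + 4*(K*C1) + |d 1|)/2 + |d 1| * K^2 := by ring
    rw [hE, hE2]
    exact absbound b1 b2 hq1 hq2 hd1a hd1b hB1 hB2
  have hcc : Real.cosh 1 < Real.cosh (1 + r) := by
    rw [Real.cosh_lt_cosh, abs_of_pos one_pos, abs_of_pos (by linarith)]
    linarith
  refine ⟨Real.cosh 1, Real.cosh (1+r) - Real.cosh 1, (C2 + 4*K*C1 + |d 1|)/2 + |d 1| * K^2,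
    by linarith, ?_⟩
  intro x hx
  rw [show Real.cosh 1 + (Real.cosh (1+r) - Real.cosh 1) = Real.cosh (1+r) by ring] at hx
  exact boundIcc hd (by linarith) hbound x hx

end Branches


theorem stmt_4 (d : ℝ → ℝ)
    (hd : ∀ x y : ℝ, d (x + y) = d x + d y)
    (hreg : RegularOn (fun x : ℝ => d (Real.cosh x) - Real.sinh x * d x) Set.univ) :
    ∃ χ : ℝ → ℝ, IsRealDerivation χ ∧ ∀ x : ℝ, d x = χ x + d 1 * x := by
  have hbound : ∃ a L M : ℝ, 0 < L ∧ ∀ x ∈ Icc a (a + L), |Rq d x| ≤ M := by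
    rcases hreg with hlb | hc | hm
    · exact branch_lb hd hlb
    · exact branch_cont hd (continuousOn_univ.mp hc)
    · have hφm : Measurable (fun x : ℝ => d (Real.cosh x) - Real.sinh x * d x) := by
        have hrf : (fun x : ℝ => d (Real.cosh x) - Real.sinh x * d x) =
            (Set.univ.restrict (fun x : ℝ => d (Real.cosh x) - Real.sinh x * d x)) ∘
            (fun x : ℝ => (⟨x, mem_univ x⟩ : (Set.univ : Set ℝ))) := rfl
        rw [hrf]
        exact hm.comp (measurable_id.subtype_mk)
      obtain ⟨M, hM⟩ := measbound (rq_measurable hd hφm) (hper hd) (hpar hd)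
      exact ⟨0, 1, M, one_pos, fun x hx => hM x (by simpa using hx)⟩
  obtain ⟨a, L, M, hL, hb⟩ := hbound
  exact conclusion hd (keyI hd hL hb)
end

section
/- Let d : ℝ → ℝ be an additive function such that the mapping φ : ℝ → ℝ defined by φ(x) = d(sinh(x)) − cosh(x)·d(x) is regular (i.e., locally bounded, or continuous, or Lebesgue measurable). Then there exists a real derivation χ : ℝ → ℝ such that d(x) = χ(x) + d(1)·x for all x ∈ ℝ. -/
open Real Set

section Aux

open MeasureTheory Filter Pointwise

/-- An additive continuous function on ℝ is linear. -/
lemma aux_lin_of_cont (f : ℝ → ℝ) (hf : ∀ x y, f (x + y) = f x + f y)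
    (hc : Continuous f) : ∀ x, f x = f 1 * x := by
  intro x
  let F : ℝ →+ ℝ := AddMonoidHom.mk' f hf
  have hcF : Continuous F := hc
  have key := (F.toRealLinearMap hcF).map_smul x (1 : ℝ)
  have hco : ⇑(F.toRealLinearMap hcF) = f := AddMonoidHom.coe_toRealLinearMap F hcF
  rw [hco] at key
  simpa [smul_eq_mul, mul_comm] using key

/-- An additive function bounded near 0 is continuous. -/
lemma aux_cont_of_bdd (f : ℝ → ℝ) (hf : ∀ x y, f (x + y) = f x + f y)
    (C : ℝ) (hC : ∀ᶠ y in nhds (0:ℝ), |f y| ≤ C) : Continuous f := by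
  have h0 : f 0 = 0 := by have := hf 0 0; simp at this; linarith
  have hnat : ∀ (n : ℕ) (x : ℝ), f ((n : ℝ) * x) = (n : ℝ) * f x := by
    intro n x
    induction n with
    | zero => simpa using h0
    | succ n ih => push_cast; rw [add_mul, one_mul, hf, ih]; ring
  have key : Filter.Tendsto f (nhds 0) (nhds 0) := by
    rw [Metric.tendsto_nhds_nhds]
    intro ε hε
    obtain ⟨δ, hδ, hb⟩ := Metric.eventually_nhds_iff.mp hC
    obtain ⟨n, hn⟩ := exists_nat_gt (max (C / ε) 0)
    have hn0 : (0:ℝ) < n := lt_of_le_of_lt (le_max_right _ _) hn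
    have hCε : C / ε < n := lt_of_le_of_lt (le_max_left _ _) hn
    refine ⟨δ / n, by positivity, ?_⟩
    intro x hx
    have hx' : |x| < δ / n := by simpa [Real.dist_eq] using hx
    have hnx : dist ((n:ℝ) * x) 0 < δ := by
      rw [Real.dist_eq, sub_zero, abs_mul, abs_of_pos hn0]
      calc (n:ℝ) * |x| < (n:ℝ) * (δ / n) := mul_lt_mul_of_pos_left hx' hn0
        _ = δ := by field_simp
    have hbx : |f ((n:ℝ) * x)| ≤ C := hb hnx
    rw [hnat, abs_mul, abs_of_pos hn0] at hbx
    have hfx : |f x| ≤ C / n := by rw [le_div_iff₀ hn0]; linarith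
    rw [Real.dist_eq, sub_zero]
    have : C / n < ε := by
      rw [div_lt_iff₀ hn0]
      rw [div_lt_iff₀ hε] at hCε
      linarith
    linarith
  rw [continuous_iff_continuousAt]
  intro a
  have heq : ∀ x, f x = f (x - a) + f a := by
    intro x
    have := hf (x - a) a
    rw [sub_add_cancel] at this
    linarith
  have t1 : Filter.Tendsto (fun x : ℝ => x - a) (nhds a) (nhds (a - a)) :=
    (continuous_id.sub continuous_const).tendsto a
  rw [sub_self] at t1
  have t2 : Filter.Tendsto (fun x => f (x - a) + f a) (nhds a) (nhds (f a)) := by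
    have := (key.comp t1).add_const (f a)
    simpa using this
  exact Filter.Tendsto.congr (fun x => (heq x).symm) t2

/-- An additive measurable function on ℝ is bounded near 0 (Steinhaus). -/
lemma aux_bdd_of_meas (f : ℝ → ℝ) (hf : ∀ x y, f (x + y) = f x + f y)
    (hm : Measurable f) : ∃ C, ∀ᶠ y in nhds (0:ℝ), |f y| ≤ C := by
  classical
  set E : ℕ → Set ℝ := fun n => Set.Icc (0:ℝ) 1 ∩ {x | |f x| ≤ n} with hE
  have hEm : ∀ n, MeasurableSet (E n) := fun n =>
    measurableSet_Icc.inter (measurableSet_le hm.abs measurable_const)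
  have hcover : Set.Icc (0:ℝ) 1 ⊆ ⋃ n, E n := by
    intro x hx
    obtain ⟨n, hn⟩ := exists_nat_ge (|f x|)
    exact Set.mem_iUnion.mpr ⟨n, hx, hn⟩
  have hpos : ∃ n, 0 < volume (E n) := by
    by_contra h
    push_neg at h
    have hz : ∀ n, volume (E n) = 0 := fun n => le_antisymm (h n) zero_le
    have : volume (Set.Icc (0:ℝ) 1) = 0 :=
      measure_mono_null hcover (measure_iUnion_null hz)
    simp [Real.volume_Icc] at this
  obtain ⟨n, hn⟩ := hpos
  have hst : E n - E n ∈ nhds (0:ℝ) :=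
    MeasureTheory.Measure.sub_mem_nhds_zero_of_addHaar_pos volume (E n) (hEm n) hn
  refine ⟨2 * n, ?_⟩
  filter_upwards [hst] with y hy
  obtain ⟨a, ha, b, hb, hab⟩ := Set.mem_sub.mp hy
  have hfa : |f a| ≤ n := ha.2
  have hfb : |f b| ≤ n := hb.2
  have hsub : f (a - b) = f a - f b := by
    have := hf (a - b) b
    rw [sub_add_cancel] at this
    linarith
  rw [← hab, hsub]
  obtain ⟨l1, r1⟩ := abs_le.mp hfa
  obtain ⟨l2, r2⟩ := abs_le.mp hfb
  rw [abs_le]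
  constructor <;> linarith

/-- An additive regular function on ℝ is linear. -/
lemma aux_lin_of_regular (f : ℝ → ℝ) (hf : ∀ x y, f (x + y) = f x + f y)
    (hr : RegularOn f Set.univ) : ∀ x, f x = f 1 * x := by
  rcases hr with hb | hc | hm
  · obtain ⟨C, hC⟩ := hb 0 (Set.mem_univ 0)
    rw [nhdsWithin_univ] at hC
    exact aux_lin_of_cont f hf (aux_cont_of_bdd f hf C hC)
  · exact aux_lin_of_cont f hf (continuousOn_univ.mp hc)
  · have hm' : Measurable f := by
      have h : f = (Set.univ.restrict f) ∘ (fun x : ℝ => (⟨x, trivial⟩ : (Set.univ : Set ℝ))) := rfl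
      rw [h]
      exact hm.comp (measurable_id.subtype_mk)
    obtain ⟨C, hC⟩ := aux_bdd_of_meas f hf hm'
    exact aux_lin_of_cont f hf (aux_cont_of_bdd f hf C hC)

/-- cosh is surjective onto `[1, ∞)`. -/
lemma aux_cosh_surj (t : ℝ) (ht : 1 ≤ t) : ∃ y : ℝ, Real.cosh y = t := by
  have ht0 : (0:ℝ) ≤ t := by linarith
  have hexp : Real.exp (t / 2) ≥ t / 2 + 1 := by
    have := Real.add_one_le_exp (t / 2)
    linarith
  have hexp2 : Real.exp t ≥ 2 * t := by
    have h2 : Real.exp t = Real.exp (t / 2) * Real.exp (t / 2) := by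
      rw [← Real.exp_add]; ring_nf
    have ha : (0:ℝ) ≤ t / 2 + 1 := by linarith
    have h4 : (t / 2 + 1) * (t / 2 + 1) ≤ Real.exp (t / 2) * Real.exp (t / 2) :=
      mul_le_mul hexp hexp ha (ha.trans hexp)
    nlinarith [sq_nonneg (t / 2 - 1)]
  have hct : t ≤ Real.cosh t := by
    rw [Real.cosh_eq]
    nlinarith [Real.exp_pos (-t)]
  have hmem : t ∈ Set.Icc (Real.cosh 0) (Real.cosh t) := by
    rw [Real.cosh_zero]
    exact ⟨ht, hct⟩
  obtain ⟨y, _, hy⟩ := intermediate_value_Icc ht0 Real.continuous_cosh.continuousOn hmem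
  exact ⟨y, hy⟩

end Aux

theorem stmt_5 (d : ℝ → ℝ)
    (hd : ∀ x y : ℝ, d (x + y) = d x + d y)
    (hreg : RegularOn (fun x : ℝ => d (Real.sinh x) - Real.cosh x * d x) Set.univ) :
    ∃ χ : ℝ → ℝ, IsRealDerivation χ ∧ ∀ x : ℝ, d x = χ x + d 1 * x := by
  set φ : ℝ → ℝ := fun x => d (Real.sinh x) - Real.cosh x * d x with hφ
  have hd0 : d 0 = 0 := by have := hd 0 0; simp at this; linarith
  have hdsub : ∀ a b, d (a - b) = d a - d b := by
    intro a b
    have := hd (a - b) b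
    rw [sub_add_cancel] at this
    linarith
  -- Key identity relating φ to the "sectional" function
  have keyid : ∀ x y : ℝ,
      φ (x + y) + φ (x - y) - 2 * Real.cosh y * φ x =
      2 * (d (Real.sinh x * Real.cosh y) - Real.cosh y * d (Real.sinh x) -
        Real.sinh x * (Real.sinh y * d y)) := by
    intro x y
    simp only [hφ, Real.sinh_add, Real.sinh_sub, Real.cosh_add, Real.cosh_sub, hd, hdsub]
    ring
  clear_value φ
  -- For each y, the sectional function is additive and regular, hence linear.
  have sec : ∀ y u : ℝ,
      d (u * Real.cosh y) - Real.cosh y * d u - u * (Real.sinh y * d y) =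
      (d (Real.cosh y) - Real.cosh y * d 1 - 1 * (Real.sinh y * d y)) * u := by
    intro y
    set g : ℝ → ℝ := fun u =>
      d (u * Real.cosh y) - Real.cosh y * d u - u * (Real.sinh y * d y) with hg
    have hgadd : ∀ u v, g (u + v) = g u + g v := by
      intro u v
      simp only [hg]
      rw [add_mul, hd, hd]
      ring
    have hgψ : ∀ u, g u =
        (φ (Real.arsinh u + y) + φ (Real.arsinh u - y) -
          2 * Real.cosh y * φ (Real.arsinh u)) / 2 := by
      intro u
      have := keyid (Real.arsinh u) y
      rw [Real.sinh_arsinh] at this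
      simp only [hg]
      linear_combination (-1/2 : ℝ) * this
    have hgreg : RegularOn g Set.univ := by
      rcases hreg with hb | hc | hm
      · left
        intro u _
        obtain ⟨C1, h1⟩ := hb (Real.arsinh u + y) (Set.mem_univ _)
        obtain ⟨C2, h2⟩ := hb (Real.arsinh u - y) (Set.mem_univ _)
        obtain ⟨C3, h3⟩ := hb (Real.arsinh u) (Set.mem_univ _)
        rw [nhdsWithin_univ] at h1 h2 h3 ⊢
        refine ⟨(C1 + C2 + 2 * |Real.cosh y| * C3) / 2, ?_⟩
        have t1 : Filter.Tendsto (fun v => Real.arsinh v + y) (nhds u)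
            (nhds (Real.arsinh u + y)) :=
          (Real.continuous_arsinh.tendsto u).add_const y
        have t2 : Filter.Tendsto (fun v => Real.arsinh v - y) (nhds u)
            (nhds (Real.arsinh u - y)) :=
          (Real.continuous_arsinh.tendsto u).sub_const y
        have t3 : Filter.Tendsto (fun v => Real.arsinh v) (nhds u)
            (nhds (Real.arsinh u)) := Real.continuous_arsinh.tendsto u
        filter_upwards [t1.eventually h1, t2.eventually h2, t3.eventually h3]
          with v hv1 hv2 hv3
        rw [hgψ v, abs_div, abs_two]
        have e3 : |2 * Real.cosh y * φ (Real.arsinh v)| ≤ 2 * |Real.cosh y| * C3 := by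
          rw [abs_mul, abs_mul, abs_two]
          gcongr
        have habs : |φ (Real.arsinh v + y) + φ (Real.arsinh v - y) -
            2 * Real.cosh y * φ (Real.arsinh v)| ≤ C1 + C2 + 2 * |Real.cosh y| * C3 := by
          obtain ⟨l1, r1⟩ := abs_le.mp hv1
          obtain ⟨l2, r2⟩ := abs_le.mp hv2
          obtain ⟨l3, r3⟩ := abs_le.mp e3
          rw [abs_le]
          constructor <;> linarith
        gcongr
      · right; left
        have hφc : Continuous φ := continuousOn_univ.mp hc
        have hge : g = fun u =>
            (φ (Real.arsinh u + y) + φ (Real.arsinh u - y) -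
              2 * Real.cosh y * φ (Real.arsinh u)) / 2 := funext hgψ
        rw [hge]
        apply Continuous.continuousOn
        apply Continuous.div_const
        exact ((hφc.comp (Real.continuous_arsinh.add continuous_const)).add
          (hφc.comp (Real.continuous_arsinh.sub continuous_const))).sub
          (continuous_const.mul (hφc.comp Real.continuous_arsinh))
      · right; right
        have hφm : Measurable φ := by
          have h : φ = (Set.univ.restrict φ) ∘
              (fun x : ℝ => (⟨x, trivial⟩ : (Set.univ : Set ℝ))) := rfl
          rw [h]
          exact hm.comp (measurable_id.subtype_mk)
        have hgm : Measurable g := by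
          have hge : g = fun u =>
              (φ (Real.arsinh u + y) + φ (Real.arsinh u - y) -
                2 * Real.cosh y * φ (Real.arsinh u)) / 2 := funext hgψ
          rw [hge]
          apply Measurable.div_const
          have ha : Measurable Real.arsinh := Real.continuous_arsinh.measurable
          exact ((hφm.comp (ha.add_const y)).add
            (hφm.comp (ha.sub_const y))).sub
            ((measurable_const).mul (hφm.comp ha))
        exact hgm.comp measurable_subtype_coe
    have hlin := aux_lin_of_regular g hgadd hgreg
    intro u
    have h1 : g 1 = d (Real.cosh y) - Real.cosh y * d 1 - 1 * (Real.sinh y * d y) := by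
      simp only [hg, one_mul]
    have := hlin u
    rw [h1] at this
    exact this
  -- Define D and show the Leibniz rule for t = cosh y, i.e. all t ≥ 1
  set D : ℝ → ℝ := fun x => d x - d 1 * x with hD
  have hDadd : ∀ a b, D (a + b) = D a + D b := by
    intro a b; simp only [hD, hd]; ring
  have hP : ∀ t : ℝ, 1 ≤ t → ∀ u, D (u * t) = t * D u + u * D t := by
    intro t ht u
    obtain ⟨y, hy⟩ := aux_cosh_surj t ht
    have hsec := sec y u
    rw [hy] at hsec
    simp only [hD]
    linear_combination hsec
  have hDP : ∀ t u : ℝ, D (u * t) = t * D u + u * D t := by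
    intro t u
    set s : ℝ := |t| + 1 with hs
    have hs1 : (1:ℝ) ≤ s := by simp only [hs]; linarith [abs_nonneg t]
    have hts : (1:ℝ) ≤ t + s := by simp only [hs]; linarith [neg_abs_le t]
    have e1 := hP (t + s) hts u
    have e2 := hP s hs1 u
    have e3 : D (u * (t + s)) = D (u * t) + D (u * s) := by
      rw [show u * (t + s) = u * t + u * s by ring, hDadd]
    have e4 : D (t + s) = D t + D s := hDadd t s
    rw [e3, e4] at e1
    linear_combination e1 - e2
  refine ⟨D, ⟨hDadd, fun x y => ?_⟩, fun x => by simp only [hD]; ring⟩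
  rw [hDP y x]; ring
end

section
/- Let d : ℝ → ℝ be an additive function, let I ⊆ ℝ be a nonempty open interval, and let ξ : I → ℝ be a continuously differentiable injective function whose inverse η = ξ⁻¹ : ξ(I) → ℝ is differentiable with derivative nowhere zero on ξ(I). Then the mapping x ↦ d(ξ(x)) − ξ'(x)·d(x) is regular on I if and only if the mapping u ↦ d(η(u)) − η'(u)·d(u) is regular on ξ(I). -/
open Real Set

/-- If `B = g · (A ∘ h)` on `s`, with `g, h` continuous on `s` and `h` mapping `s` into `t`,
then regularity of `A` on `t` transfers to regularity of `B` on `s`. -/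
lemma regular_transfer (A B g h : ℝ → ℝ) (s t : Set ℝ)
    (hh : ContinuousOn h s) (hmaps : Set.MapsTo h s t) (hg : ContinuousOn g s)
    (heq : ∀ u ∈ s, B u = g u * A (h u)) :
    RegularOn A t → RegularOn B s := by
  rintro (hA | hA | hA)
  · left
    intro x hx
    obtain ⟨C, hC⟩ := hA (h x) (hmaps hx)
    refine ⟨(|g x| + 1) * |C|, ?_⟩
    have h1 : ∀ᶠ y in nhdsWithin x s, |A (h y)| ≤ C :=
      ((hh x hx).tendsto_nhdsWithin hmaps).eventually hC
    have h2 : ∀ᶠ y in nhdsWithin x s, |g y| ≤ |g x| + 1 := by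
      have hball : ∀ᶠ y in nhdsWithin x s, g y ∈ Metric.ball (g x) 1 :=
        (hg x hx) (Metric.ball_mem_nhds _ one_pos)
      filter_upwards [hball] with y hy
      have h3 : |g y - g x| < 1 := by
        simpa [Real.dist_eq] using (Metric.mem_ball.mp hy)
      have h4 : |g y| - |g x| ≤ |g y - g x| := abs_sub_abs_le_abs_sub _ _
      linarith
    filter_upwards [h1, h2, self_mem_nhdsWithin] with y hAy hgy hys
    rw [heq y hys, abs_mul]
    exact mul_le_mul hgy (hAy.trans (le_abs_self C)) (abs_nonneg _)
      (by positivity)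
  · right; left
    exact ContinuousOn.congr (hg.mul (hA.comp hh hmaps)) heq
  · right; right
    have hF : Measurable (fun u : s => (⟨h u.1, hmaps u.2⟩ : t)) :=
      Measurable.subtype_mk (hh.restrict.measurable)
    have hgm : Measurable (s.restrict g) := hg.restrict.measurable
    have : s.restrict B =
        fun u : s => s.restrict g u * ((t.restrict A) ∘ fun u : s => (⟨h u.1, hmaps u.2⟩ : t)) u :=
      funext fun u => heq u u.2
    rw [this]
    exact hgm.mul (hA.comp hF)

theorem stmt_6 (d : ℝ → ℝ)
    (hd : ∀ x y : ℝ, d (x + y) = d x + d y)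
    (I : Set ℝ) (hI : IsOpen I) (hIc : I.OrdConnected) (hIne : I.Nonempty)
    (ξ ξ' η η' : ℝ → ℝ)
    (hξ : ∀ x ∈ I, HasDerivWithinAt ξ (ξ' x) I x)
    (hξ' : ContinuousOn ξ' I)
    (hinj : Set.InjOn ξ I)
    (hleft : ∀ x ∈ I, η (ξ x) = x)
    (hη : ∀ u ∈ ξ '' I, HasDerivWithinAt η (η' u) (ξ '' I) u)
    (hη' : ∀ u ∈ ξ '' I, η' u ≠ 0) :
    RegularOn (fun x : ℝ => d (ξ x) - ξ' x * d x) I ↔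
      RegularOn (fun u : ℝ => d (η u) - η' u * d u) (ξ '' I) := by
  have hcξ : ContinuousOn ξ I := fun x hx => (hξ x hx).continuousWithinAt
  have hcη : ContinuousOn η (ξ '' I) := fun u hu => (hη u hu).continuousWithinAt
  have hmapsξ : Set.MapsTo ξ I (ξ '' I) := mapsTo_image ξ I
  have hmapsη : Set.MapsTo η (ξ '' I) I := by
    rintro u ⟨x, hx, rfl⟩
    rw [hleft x hx]; exact hx
  have hright : ∀ u ∈ ξ '' I, ξ (η u) = u := by
    rintro u ⟨x, hx, rfl⟩
    rw [hleft x hx]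
  -- key chain-rule identity
  have key : ∀ x ∈ I, η' (ξ x) * ξ' x = 1 := by
    intro x hx
    have h1 : HasDerivWithinAt (η ∘ ξ) (η' (ξ x) * ξ' x) I x :=
      (hη (ξ x) (mem_image_of_mem ξ hx)).comp x (hξ x hx) hmapsξ
    have h2 : HasDerivWithinAt id (η' (ξ x) * ξ' x) I x :=
      h1.congr (fun y hy => (hleft y hy).symm) (hleft x hx).symm
    have h3 : HasDerivAt id (η' (ξ x) * ξ' x) x := h2.hasDerivAt (hI.mem_nhds hx)
    exact h3.unique (hasDerivAt_id x)
  have key' : ∀ u ∈ ξ '' I, η' u * ξ' (η u) = 1 := by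
    intro u hu
    have := key (η u) (hmapsη hu)
    rwa [hright u hu] at this
  have hξ'ne : ∀ x ∈ I, ξ' x ≠ 0 := by
    intro x hx h0
    have := key x hx
    rw [h0, mul_zero] at this
    exact one_ne_zero this.symm
  have hη'eq : ∀ u ∈ ξ '' I, η' u = (ξ' (η u))⁻¹ := by
    intro u hu
    have h1 := key' u hu
    field_simp [hξ'ne (η u) (hmapsη hu)] at h1 ⊢
    linarith [h1]
  have hcη' : ContinuousOn η' (ξ '' I) := by
    apply ContinuousOn.congr (f := fun u => (ξ' (η u))⁻¹)
    · exact (hξ'.comp hcη hmapsη).inv₀ (fun u hu => hξ'ne (η u) (hmapsη hu))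
    · exact hη'eq
  constructor
  · apply regular_transfer _ _ (fun u => -η' u) η _ _ hcη hmapsη hcη'.neg
    intro u hu
    have h1 := key' u hu
    rw [hright u hu]
    linear_combination (-d (η u)) * h1
  · apply regular_transfer _ _ (fun x => -ξ' x) ξ _ _ hcξ hmapsξ hξ'.neg
    intro x hx
    have h1 := key x hx
    rw [hleft x hx]
    linear_combination (-d (ξ x)) * h1
end

section
/- Let d : ℝ → ℝ be an additive function such that the mapping φ defined on (1, ∞) by φ(x) = d(arcosh(x)) − (1/√(x² − 1))·d(x) is regular on (1, ∞) (i.e., locally bounded, or continuous, or Lebesgue measurable), where arcosh(x) = ln(x + √(x² − 1)) is the inverse of cosh restricted to [0, ∞). Then there exists a real derivation χ : ℝ → ℝ such that d(x) = χ(x) + d(1)·x for all x ∈ ℝ. -/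
open Real Set

section Aux

set_option maxHeartbeats 1000000

open MeasureTheory Pointwise Filter

/-- An additive function bounded on a set of positive measure is linear. -/
theorem additive_linear_of_bounded_s10 (h : ℝ → ℝ)
    (hadd : ∀ x y : ℝ, h (x + y) = h x + h y)
    (S : Set ℝ) (hS : MeasurableSet S) (hpos : 0 < volume S)
    (C : ℝ) (hb : ∀ x ∈ S, |h x| ≤ C) :
    ∀ x : ℝ, h x = h 1 * x := by
  set H : ℝ →+ ℝ := AddMonoidHom.mk' h hadd with hH
  have hC : 0 ≤ C := by
    obtain ⟨x, hx⟩ := nonempty_of_measure_ne_zero hpos.ne'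
    exact le_trans (abs_nonneg _) (hb x hx)
  have hsub : S - S ∈ nhds (0 : ℝ) :=
    MeasureTheory.Measure.sub_mem_nhds_zero_of_addHaar_pos volume S hS hpos
  obtain ⟨δ, hδ, hball⟩ := Metric.mem_nhds_iff.mp hsub
  have hbound : ∀ z ∈ S - S, |h z| ≤ 2 * C := by
    intro z hz
    obtain ⟨a, ha, b, hb', hab⟩ := Set.mem_sub.mp hz
    have : h z = h a - h b := by
      rw [← hab]
      have := hadd (a - b) b
      simp only [sub_add_cancel] at this
      linarith
    rw [this]
    calc |h a - h b| ≤ |h a| + |h b| := abs_sub _ _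
      _ ≤ 2 * C := by have := hb a ha; have := hb b hb'; linarith
  -- continuity at 0
  have hcont0 : ContinuousAt h 0 := by
    have h0 : h 0 = 0 := by
      have h00 := hadd 0 0
      simp only [add_zero] at h00; linarith
    rw [Metric.continuousAt_iff]
    intro ε hε
    obtain ⟨n, hn⟩ := exists_nat_gt (2 * C / ε)
    refine ⟨δ / (n + 1), by positivity, fun {x} hx => ?_⟩
    have hnx : (n + 1 : ℝ) * x ∈ S - S := by
      apply hball
      rw [Metric.mem_ball, Real.dist_eq, sub_zero]
      rw [Real.dist_eq, sub_zero] at hx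
      rw [abs_mul]
      have : |((n : ℝ) + 1)| = (n : ℝ) + 1 := abs_of_pos (by positivity)
      rw [this]
      calc ((n : ℝ) + 1) * |x| < ((n : ℝ) + 1) * (δ / (n + 1)) := by
            apply mul_lt_mul_of_pos_left hx (by positivity)
        _ = δ := by field_simp
    have hsmul : h ((n + 1 : ℝ) * x) = ((n : ℝ) + 1) * h x := by
      have := H.map_nsmul (n + 1) x
      simp only [nsmul_eq_mul, Nat.cast_add, Nat.cast_one] at this
      simpa [hH] using this
    have := hbound _ hnx
    rw [hsmul, abs_mul, abs_of_pos (show (0:ℝ) < (n:ℝ)+1 by positivity)] at this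
    rw [Real.dist_eq, h0, sub_zero]
    have hlt : 2 * C < ε * ((n : ℝ) + 1) := by
      rw [div_lt_iff₀ hε] at hn
      nlinarith [hn]
    nlinarith [this, hε, (show (0:ℝ) < (n:ℝ)+1 by positivity)]
  have hcont : Continuous h := by
    have : ContinuousAt H 0 := hcont0
    exact continuous_of_continuousAt_zero H this
  intro x
  have := map_real_smul H hcont x 1
  simp only [smul_eq_mul, mul_one] at this
  simpa [hH, mul_comm] using this

noncomputable def Ar (u : ℝ) : ℝ := Real.log (u + Real.sqrt (u ^ 2 - 1))

lemma Ar_cosh {u : ℝ} (hu : 1 < u) :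
    Real.cosh (Ar u) = u ∧ Real.sinh (Ar u) = Real.sqrt (u ^ 2 - 1) ∧ 0 < Ar u := by
  set r := Real.sqrt (u ^ 2 - 1) with hr
  have hr2 : r ^ 2 = u ^ 2 - 1 := Real.sq_sqrt (by nlinarith)
  have hrpos : 0 < r := Real.sqrt_pos.mpr (by nlinarith)
  have hru : r < u := by nlinarith
  have hpos : (0 : ℝ) < u + r := by linarith
  have hexp : Real.exp (Ar u) = u + r := Real.exp_log hpos
  have hmul : (u - r) * (u + r) = 1 := by nlinarith
  have hexpneg : Real.exp (-Ar u) = u - r := by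
    rw [Real.exp_neg, hexp]
    exact (eq_inv_of_mul_eq_one_left hmul).symm
  refine ⟨?_, ?_, ?_⟩
  · rw [Real.cosh_eq, hexp, hexpneg]; ring
  · rw [Real.sinh_eq, hexp, hexpneg]; ring
  · exact Real.log_pos (by linarith)

lemma Ar_measurable : Measurable Ar := by
  apply Real.measurable_log.comp
  exact measurable_id.add (Real.continuous_sqrt.measurable.comp
    ((measurable_id.pow_const 2).sub measurable_const))

lemma Ar_continuousAt {u : ℝ} (hu : 1 < u) : ContinuousAt Ar u := by
  have h1 : ContinuousAt (fun u : ℝ => u + Real.sqrt (u ^ 2 - 1)) u := by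
    exact continuousAt_id.add (Real.continuous_sqrt.continuousAt.comp
      (by fun_prop))
  apply (Real.continuousAt_log ?_).comp h1
  have : 0 ≤ Real.sqrt (u ^ 2 - 1) := Real.sqrt_nonneg _
  dsimp; intro hc; nlinarith

section D
variable (d : ℝ → ℝ) (hd : ∀ x y : ℝ, d (x + y) = d x + d y)
include hd

lemma d_zero : d 0 = 0 := by have := hd 0 0; simp only [add_zero] at this; linarith

lemma d_neg (x : ℝ) : d (-x) = -d x := by
  have := hd x (-x); simp only [add_neg_cancel] at this
  have h0 := d_zero d hd; linarith

lemma d_two (x : ℝ) : d (2 * x) = 2 * d x := by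
  have := hd x x; rw [show x + x = 2 * x by ring] at this; linarith

/-- The function g. -/
noncomputable def gfun : ℝ → ℝ := fun s => d (Real.cosh s) - Real.sinh s * d s

lemma gfun_even (s : ℝ) : gfun d (-s) = gfun d s := by
  unfold gfun
  rw [Real.cosh_neg, Real.sinh_neg, d_neg d hd]
  ring

/-- The biadditive defect. -/
noncomputable def Bfun : ℝ → ℝ → ℝ := fun u v => d (u * v) - u * d v - v * d u

lemma key_ident (s t : ℝ) :
    gfun d (s + t) + gfun d (s - t) - 2 * Real.cosh s * gfun d t
      - 2 * Real.cosh t * gfun d s = 2 * Bfun d (Real.cosh s) (Real.cosh t) := by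
  have h1 : d (Real.cosh (s + t)) + d (Real.cosh (s - t))
      = 2 * d (Real.cosh s * Real.cosh t) := by
    have hc : Real.cosh (s + t) + Real.cosh (s - t)
        = 2 * (Real.cosh s * Real.cosh t) := by
      rw [Real.cosh_add, Real.cosh_sub]; ring
    calc d (Real.cosh (s + t)) + d (Real.cosh (s - t))
        = d (Real.cosh (s + t) + Real.cosh (s - t)) := (hd _ _).symm
      _ = d (2 * (Real.cosh s * Real.cosh t)) := by rw [hc]
      _ = 2 * d (Real.cosh s * Real.cosh t) := d_two d hd _
  have h2 : d (s + t) = d s + d t := hd s t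
  have h3 : d (s - t) = d s - d t := by
    have := hd (s - t) t; simp only [sub_add_cancel] at this; linarith
  unfold gfun Bfun
  rw [h2, h3, Real.sinh_add, Real.sinh_sub]
  linarith [h1]

end D

lemma Ar_cosh_self {s : ℝ} (hs : 0 < s) : Ar (Real.cosh s) = s := by
  unfold Ar
  have h1 : Real.cosh s ^ 2 - 1 = Real.sinh s ^ 2 := by
    have := Real.cosh_sq s; linarith
  rw [h1, Real.sqrt_sq (le_of_lt (by rwa [Real.sinh_pos_iff])),
    Real.cosh_add_sinh, Real.log_exp]


noncomputable def phifun (d : ℝ → ℝ) : ℝ → ℝ := fun x =>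
  d (Real.log (x + Real.sqrt (x ^ 2 - 1))) - (1 / Real.sqrt (x ^ 2 - 1)) * d x


lemma g_phi (d : ℝ → ℝ) {s : ℝ} (hs : 0 < s) :
    gfun d s = -Real.sinh s * phifun d (Real.cosh s) := by
  have hsh : 0 < Real.sinh s := Real.sinh_pos_iff.mpr hs
  have h1 : Real.cosh s ^ 2 - 1 = Real.sinh s ^ 2 := by
    have := Real.cosh_sq s; linarith
  unfold gfun phifun
  rw [h1, Real.sqrt_sq hsh.le, Real.cosh_add_sinh, Real.log_exp]
  field_simp
  ring

lemma bounded_of_locallyBounded (d : ℝ → ℝ) (hd : ∀ x y : ℝ, d (x + y) = d x + d y)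
    (hloc : LocallyBoundedOn (phifun d) (Set.Ioi 1)) {v : ℝ} (hv : 1 < v) :
    ∃ S : Set ℝ, ∃ C : ℝ, MeasurableSet S ∧ 0 < volume S ∧
      ∀ u ∈ S, |Bfun d u v| ≤ C := by
  obtain ⟨hct, -, htpos⟩ := Ar_cosh hv
  set t := Ar v with ht
  set s₀ : ℝ := t + 1 with hs₀
  set u₀ : ℝ := Real.cosh s₀ with hu₀def
  have hs₀pos : 0 < s₀ := by linarith
  have hu₀ : 1 < u₀ := Real.one_lt_cosh.mpr hs₀pos.ne'
  have hAru₀ : Ar u₀ = s₀ := Ar_cosh_self hs₀pos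
  have hp₁ : (1 : ℝ) < Real.cosh (s₀ + t) := Real.one_lt_cosh.mpr (by positivity)
  have hp₂ : (1 : ℝ) < Real.cosh (s₀ - t) := by
    have : s₀ - t = 1 := by rw [hs₀]; ring
    rw [this]; exact Real.one_lt_cosh.mpr one_ne_zero
  -- local bounds
  have nhds_eq : ∀ p : ℝ, 1 < p → nhdsWithin p (Set.Ioi 1) = nhds p := fun p hp =>
    nhdsWithin_eq_nhds.mpr (isOpen_Ioi.mem_nhds hp)
  obtain ⟨C₁, hC₁⟩ := hloc _ hp₁
  obtain ⟨C₂, hC₂⟩ := hloc _ hp₂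
  obtain ⟨C₃, hC₃⟩ := hloc _ hu₀
  rw [nhds_eq _ hp₁] at hC₁
  rw [nhds_eq _ hp₂] at hC₂
  rw [nhds_eq _ hu₀] at hC₃
  -- continuity facts
  have hAt : ContinuousAt Ar u₀ := Ar_continuousAt hu₀
  have hAt' : Filter.Tendsto Ar (nhds u₀) (nhds s₀) := by
    have := hAt; rwa [ContinuousAt, hAru₀] at this
  have evA : ∀ᶠ u in nhds u₀, Ar u ∈ Set.Ioo t (s₀ + 1) :=
    hAt' (Ioo_mem_nhds (by linarith) (by linarith))
  have tend₁ : Filter.Tendsto (fun u => Real.cosh (Ar u + t)) (nhds u₀)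
      (nhds (Real.cosh (s₀ + t))) :=
    (Real.continuous_cosh.tendsto _).comp (hAt'.add tendsto_const_nhds)
  have tend₂ : Filter.Tendsto (fun u => Real.cosh (Ar u - t)) (nhds u₀)
      (nhds (Real.cosh (s₀ - t))) :=
    (Real.continuous_cosh.tendsto _).comp (hAt'.sub tendsto_const_nhds)
  have ev₁ : ∀ᶠ u in nhds u₀, |phifun d (Real.cosh (Ar u + t))| ≤ C₁ := tend₁.eventually hC₁
  have ev₂ : ∀ᶠ u in nhds u₀, |phifun d (Real.cosh (Ar u - t))| ≤ C₂ := tend₂.eventually hC₂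
  have ev₃ : ∀ᶠ u in nhds u₀, |phifun d u| ≤ C₃ := hC₃
  have ev₀ : ∀ᶠ u in nhds u₀, u ∈ Set.Ioo 1 (u₀ + 1) :=
    eventually_mem_nhds_iff.mpr ((isOpen_Ioo).mem_nhds ⟨hu₀, by linarith⟩) |>.mono
      fun u hu => mem_of_mem_nhds hu
  -- constants
  set A₁ : ℝ := Real.sinh (s₀ + 1 + t) with hA₁
  set A₂ : ℝ := Real.sinh (s₀ + 1) with hA₂
  set M₁ : ℝ := max C₁ 0
  set M₂ : ℝ := max C₂ 0
  set M₃ : ℝ := max C₃ 0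
  have hA₁pos : 0 < A₁ := Real.sinh_pos_iff.mpr (by linarith)
  have hA₂pos : 0 < A₂ := Real.sinh_pos_iff.mpr (by linarith)
  set K : ℝ := A₁ * M₁ + A₂ * M₂ + 2 * (u₀ + 1) * |gfun d t| + 2 * v * (A₂ * M₃) with hK
  have hbig : ∀ᶠ u in nhds u₀, |Bfun d u v| ≤ K / 2 := by
    filter_upwards [evA, ev₁, ev₂, ev₃, ev₀] with u hA h1 h2 h3 h0
    obtain ⟨hu1, huu⟩ := h0
    obtain ⟨hAl, hAu⟩ := hA
    have hArpos : 0 < Ar u := lt_trans htpos hAl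
    have hcoshAr : Real.cosh (Ar u) = u := (Ar_cosh hu1).1
    have hkey := key_ident d hd (Ar u) t
    rw [hcoshAr, hct] at hkey
    -- rewrite g's via φ
    have hg1 : gfun d (Ar u + t) = -Real.sinh (Ar u + t) *
        phifun d (Real.cosh (Ar u + t)) := g_phi d (by linarith)
    have hg2 : gfun d (Ar u - t) = -Real.sinh (Ar u - t) *
        phifun d (Real.cosh (Ar u - t)) := g_phi d (by linarith)
    have hg3 : gfun d (Ar u) = -Real.sinh (Ar u) * phifun d u := by
      have := g_phi d hArpos; rwa [hcoshAr] at this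
    -- bounds on each term
    have hb1 : |gfun d (Ar u + t)| ≤ A₁ * M₁ := by
      rw [hg1, abs_mul, abs_neg, abs_of_pos (Real.sinh_pos_iff.mpr (by linarith))]
      exact mul_le_mul ((Real.sinh_le_sinh).mpr (by linarith))
        (le_trans h1 (le_max_left _ _)) (abs_nonneg _) hA₁pos.le
    have hb2 : |gfun d (Ar u - t)| ≤ A₂ * M₂ := by
      rw [hg2, abs_mul, abs_neg, abs_of_pos (Real.sinh_pos_iff.mpr (by linarith))]
      exact mul_le_mul ((Real.sinh_le_sinh).mpr (by linarith))
        (le_trans h2 (le_max_left _ _)) (abs_nonneg _) hA₂pos.le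
    have hb3 : |gfun d (Ar u)| ≤ A₂ * M₃ := by
      rw [hg3, abs_mul, abs_neg, abs_of_pos (Real.sinh_pos_iff.mpr hArpos)]
      exact mul_le_mul ((Real.sinh_le_sinh).mpr (by linarith))
        (le_trans h3 (le_max_left _ _)) (abs_nonneg _) hA₂pos.le
    have h2B : 2 * Bfun d u v = gfun d (Ar u + t) + gfun d (Ar u - t)
        - 2 * u * gfun d t - 2 * v * gfun d (Ar u) := by linarith [hkey]
    have habs : |2 * Bfun d u v| ≤ K := by
      rw [h2B, hK]
      have e1 : |2 * u * gfun d t| ≤ 2 * (u₀ + 1) * |gfun d t| := by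
        rw [abs_mul, abs_mul, abs_of_nonneg (by norm_num : (0:ℝ) ≤ 2),
          abs_of_pos (by linarith : (0:ℝ) < u)]
        have := abs_nonneg (gfun d t)
        nlinarith
      have e2 : |2 * v * gfun d (Ar u)| ≤ 2 * v * (A₂ * M₃) := by
        rw [abs_mul, abs_mul, abs_of_nonneg (by norm_num : (0:ℝ) ≤ 2),
          abs_of_pos (by linarith : (0:ℝ) < v)]
        nlinarith [hb3, abs_nonneg (gfun d (Ar u))]
      calc |gfun d (Ar u + t) + gfun d (Ar u - t) - 2 * u * gfun d t
            - 2 * v * gfun d (Ar u)|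
          ≤ |gfun d (Ar u + t)| + |gfun d (Ar u - t)| + |2 * u * gfun d t|
            + |2 * v * gfun d (Ar u)| := by
            apply le_trans (abs_sub _ _)
            apply add_le_add_left
            apply le_trans (abs_sub _ _)
            exact add_le_add_left (abs_add_le _ _) _
        _ ≤ A₁ * M₁ + A₂ * M₂ + 2 * (u₀ + 1) * |gfun d t| + 2 * v * (A₂ * M₃) := by
            linarith [hb1, hb2, e1, e2]
    rw [abs_mul, abs_of_nonneg (by norm_num : (0:ℝ) ≤ 2)] at habs
    linarith
  obtain ⟨δ, hδ, hball⟩ := Metric.eventually_nhds_iff_ball.mp hbig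
  refine ⟨Metric.ball u₀ δ, K / 2, measurableSet_ball, ?_, fun u hu => hball u hu⟩
  exact Metric.measure_ball_pos volume u₀ hδ

lemma bounded_of_measurable (d : ℝ → ℝ) (hd : ∀ x y : ℝ, d (x + y) = d x + d y)
    (hmeas : Measurable ((Set.Ioi (1:ℝ)).restrict (phifun d))) {v : ℝ} (hv : 1 < v) :
    ∃ S : Set ℝ, ∃ C : ℝ, MeasurableSet S ∧ 0 < volume S ∧
      ∀ u ∈ S, |Bfun d u v| ≤ C := by
  obtain ⟨hct, -, htpos⟩ := Ar_cosh hv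
  set t := Ar v with ht
  -- a measurable global version of φ
  set ψ : ℝ → ℝ := fun x =>
    if hx : x ∈ Set.Ioi (1:ℝ) then (Set.Ioi (1:ℝ)).restrict (phifun d) ⟨x, hx⟩ else 0
    with hψdef
  have hψm : Measurable ψ := Measurable.dite hmeas measurable_const measurableSet_Ioi
  have hψeq : ∀ x : ℝ, 1 < x → ψ x = phifun d x := fun x hx => dif_pos hx
  -- a measurable global version of g
  set G : ℝ → ℝ := fun s =>
    if s = 0 then d 1 else -Real.sinh |s| * ψ (Real.cosh s) with hGdef
  have hGm : Measurable G := by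
    apply Measurable.ite (measurableSet_eq) measurable_const
    exact ((Real.continuous_sinh.comp continuous_abs).measurable).neg.mul
      (hψm.comp Real.continuous_cosh.measurable)
  have hGeq : ∀ s, G s = gfun d s := by
    intro s
    by_cases hs : s = 0
    · subst hs
      simp only [hGdef, if_pos rfl, gfun, Real.cosh_zero, Real.sinh_zero, zero_mul, sub_zero]
    · have habs : 0 < |s| := abs_pos.mpr hs
      have hcosh : 1 < Real.cosh s := Real.one_lt_cosh.mpr hs
      have h1 : gfun d |s| = gfun d s := by
        rcases abs_cases s with ⟨h, -⟩ | ⟨h, -⟩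
        · rw [h]
        · rw [h]; exact gfun_even d hd s
      have h2 := g_phi d habs
      rw [Real.cosh_abs] at h2
      simp only [hGdef, if_neg hs]
      rw [hψeq _ hcosh, ← h2, h1]
  set H : ℝ → ℝ := fun u =>
    G (Ar u + t) + G (Ar u - t) - 2 * u * G t - 2 * v * G (Ar u) with hHdef
  have hHm : Measurable H := by
    apply Measurable.sub
    apply Measurable.sub
    · exact (hGm.comp (Ar_measurable.add_const t)).add (hGm.comp (Ar_measurable.sub_const t))
    · exact (measurable_const.mul measurable_id).mul measurable_const
    · exact measurable_const.mul (hGm.comp Ar_measurable)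
  have hHeq : ∀ u : ℝ, 1 < u → H u = 2 * Bfun d u v := by
    intro u hu
    have hkey := key_ident d hd (Ar u) t
    rw [(Ar_cosh hu).1, hct] at hkey
    simp only [hHdef, hGeq]
    linarith [hkey]
  -- find a set of positive measure on which H is bounded
  set Sn : ℕ → Set ℝ := fun n => Set.Ioo (1:ℝ) 2 ∩ {u | |H u| ≤ (n : ℝ)} with hSn
  have hSnm : ∀ n, MeasurableSet (Sn n) :=
    fun n => measurableSet_Ioo.inter (measurableSet_le hHm.abs measurable_const)
  have hcover : Set.Ioo (1:ℝ) 2 ⊆ ⋃ n : ℕ, Sn n := by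
    intro u hu
    obtain ⟨n, hn⟩ := exists_nat_ge |H u|
    exact Set.mem_iUnion.mpr ⟨n, hu, hn⟩
  have hex : ∃ n : ℕ, volume (Sn n) ≠ 0 := by
    by_contra hno
    push_neg at hno
    have h0 : volume (⋃ n : ℕ, Sn n) = 0 := measure_iUnion_null hno
    have hle : volume (Set.Ioo (1:ℝ) 2) ≤ volume (⋃ n : ℕ, Sn n) :=
      measure_mono hcover
    rw [h0] at hle
    simp [Real.volume_Ioo] at hle
  obtain ⟨n, hn⟩ := hex
  refine ⟨Sn n, n, hSnm n, lt_of_le_of_ne zero_le (Ne.symm hn), ?_⟩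
  intro u hu
  obtain ⟨hu12, hHu⟩ := hu
  simp only [Set.mem_setOf_eq] at hHu
  have := hHeq u hu12.1
  rw [this] at hHu
  rw [abs_mul, abs_of_nonneg (by norm_num : (0:ℝ) ≤ 2)] at hHu
  have : (0:ℝ) ≤ |Bfun d u v| := abs_nonneg _
  linarith [hHu]

end Aux

theorem stmt_10 (d : ℝ → ℝ)
    (hd : ∀ x y : ℝ, d (x + y) = d x + d y)
    (hreg : RegularOn
      (fun x : ℝ => d (Real.log (x + Real.sqrt (x ^ 2 - 1))) -
        (1 / Real.sqrt (x ^ 2 - 1)) * d x)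
      (Set.Ioi 1)) :
    ∃ χ : ℝ → ℝ, IsRealDerivation χ ∧ ∀ x : ℝ, d x = χ x + d 1 * x := by
  have hreg' : RegularOn (phifun d) (Set.Ioi 1) := hreg
  -- in every case, for every `v > 1` we get a positive-measure set on which
  -- `u ↦ Bfun d u v` is bounded
  have hbnd : ∀ v : ℝ, 1 < v → ∃ S : Set ℝ, ∃ C : ℝ, MeasurableSet S ∧
      0 < MeasureTheory.volume S ∧ ∀ u ∈ S, |Bfun d u v| ≤ C := by
    intro v hv
    rcases hreg' with hloc | hcont | hmeas
    · exact bounded_of_locallyBounded d hd hloc hv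
    · exact bounded_of_measurable d hd hcont.restrict.measurable hv
    · exact bounded_of_measurable d hd hmeas hv
  -- hence `Bfun d · v` is linear for every `v > 1`
  have hB : ∀ v : ℝ, 1 < v → ∀ u : ℝ, Bfun d u v = -(d 1) * (u * v) := by
    intro v hv u
    obtain ⟨S, C, hS, hpos, hb⟩ := hbnd v hv
    have hBadd : ∀ x y : ℝ, Bfun d (x + y) v = Bfun d x v + Bfun d y v := by
      intro x y
      unfold Bfun
      rw [show (x + y) * v = x * v + y * v by ring, hd (x * v) (y * v), hd x y]
      ring
    have hlin := additive_linear_of_bounded_s10 (fun u => Bfun d u v) hBadd S hS hpos C hb u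
    have hB1 : Bfun d 1 v = -(v * d 1) := by unfold Bfun; rw [one_mul]; ring
    simp only [hB1] at hlin
    rw [hlin]; ring
  -- extend to all `v` by additivity in the second variable
  have hBall : ∀ u v : ℝ, Bfun d u v = -(d 1) * (u * v) := by
    intro u v
    set c : ℝ := |v| + 2 with hc
    have hc1 : 1 < c := by have := abs_nonneg v; simp only [hc]; linarith
    have hvc : 1 < v + c := by have := neg_abs_le v; simp only [hc]; linarith
    have hadd2 : Bfun d u (v + c) = Bfun d u v + Bfun d u c := by
      unfold Bfun
      rw [mul_add, hd (u * v) (u * c), hd v c]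
      ring
    have h1 := hB (v + c) hvc u
    have h2 := hB c hc1 u
    rw [hadd2, h2] at h1
    linarith [h1]
  refine ⟨fun x => d x - d 1 * x, ⟨?_, ?_⟩, ?_⟩
  · intro x y
    show d (x + y) - d 1 * (x + y) = (d x - d 1 * x) + (d y - d 1 * y)
    rw [hd x y]; ring
  · intro x y
    have hB := hBall x y
    unfold Bfun at hB
    show d (x * y) - d 1 * (x * y) = x * (d y - d 1 * y) + y * (d x - d 1 * x)
    linarith [hB]
  · intro x
    show d x = (d x - d 1 * x) + d 1 * x
    ring
end

section
/- Let d : ℝ → ℝ be an additive function such that the mapping φ : ℝ → ℝ defined by φ(x) = d(arsinh(x)) − (1/√(x² + 1))·d(x) is regular (i.e., locally bounded, or continuous, or Lebesgue measurable), where arsinh(x) = ln(x + √(x² + 1)) is the inverse of sinh. Then there exists a real derivation χ : ℝ → ℝ such that d(x) = χ(x) + d(1)·x for all x ∈ ℝ. -/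
open Real Set

section AuxiliaryLemmas
open MeasureTheory Filter


lemma additive_ratSmul (f : ℝ → ℝ) (hf : ∀ x y : ℝ, f (x + y) = f x + f y)
    (q : ℚ) (x : ℝ) : f ((q : ℝ) * x) = (q : ℝ) * f x := by
  have := map_ratCast_smul (AddMonoidHom.mk' f hf) ℝ ℝ q x
  simpa [smul_eq_mul] using this

lemma additive_eq_linear_of_bdd (f : ℝ → ℝ) (hf : ∀ x y : ℝ, f (x + y) = f x + f y)
    (hb : ∃ M : ℝ, ∀ᶠ x in nhds (0:ℝ), |f x| ≤ M) : ∀ x, f x = f 1 * x := by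
  obtain ⟨M, hM⟩ := hb
  set g : ℝ → ℝ := fun x => f x - f 1 * x with hg
  have hgadd : ∀ x y : ℝ, g (x + y) = g x + g y := by
    intro x y; simp only [hg, hf x y]; ring
  have hgq : ∀ (q : ℚ) (x : ℝ), g ((q:ℝ) * x) = (q:ℝ) * g x := by
    intro q x; simp only [hg, additive_ratSmul f hf q x]; ring
  have hgrat : ∀ q : ℚ, g ((q:ℝ)) = 0 := by
    intro q
    have := hgq q 1
    simp only [mul_one] at this
    have hg1 : g 1 = 0 := by simp [hg]
    rw [hg1, mul_zero] at this; exact this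
  obtain ⟨δ, hδ, hball⟩ := Metric.eventually_nhds_iff.mp hM
  have hM0 : 0 ≤ M := by
    have h0 : f 0 = 0 := by have := hf 0 0; simpa using this.symm
    have := hball (show dist (0:ℝ) 0 < δ by simpa using hδ)
    simpa [h0] using this
  have hgbd : ∀ x : ℝ, |x| < δ → |g x| ≤ M + |f 1| * δ := by
    intro x hx
    have h1 : |f x| ≤ M := hball (by simpa [Real.dist_eq] using hx)
    have h2 : |f 1 * x| ≤ |f 1| * δ := by
      rw [abs_mul]
      exact mul_le_mul_of_nonneg_left hx.le (abs_nonneg _)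
    calc |g x| = |f x - f 1 * x| := rfl
      _ ≤ |f x| + |f 1 * x| := abs_sub _ _
      _ ≤ M + |f 1| * δ := add_le_add h1 h2
  set M' : ℝ := M + |f 1| * δ with hM'
  have hM'0 : 0 ≤ M' := by positivity
  have hzero : ∀ x : ℝ, g x = 0 := by
    intro x
    by_contra hx
    have hpos : 0 < |g x| := abs_pos.mpr hx
    obtain ⟨n, hn⟩ := exists_nat_gt (M' / |g x|)
    have hn0 : 0 < (n : ℝ) := lt_of_le_of_lt (div_nonneg hM'0 hpos.le) hn
    obtain ⟨q, hq⟩ := exists_rat_near ((n:ℝ) * x) hδ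
    have h1 : g ((n:ℝ) * x) = g ((n:ℝ) * x - (q:ℝ)) := by
      have h := hgadd ((n:ℝ) * x - (q:ℝ)) (q:ℝ)
      rw [sub_add_cancel, hgrat q, add_zero] at h
      exact h
    have h2 : |g ((n:ℝ) * x - (q:ℝ))| ≤ M' := hgbd _ hq
    have h3 : g ((n:ℝ) * x) = (n:ℝ) * g x := by
      have := hgq (n : ℚ) x
      simpa using this
    have h4 : (n:ℝ) * |g x| ≤ M' := by
      calc (n:ℝ) * |g x| = |g ((n:ℝ) * x)| := by rw [h3, abs_mul, abs_of_pos hn0]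
        _ ≤ M' := h1 ▸ h2
    have h5 : M' < (n:ℝ) * |g x| := by
      rw [div_lt_iff₀ hpos] at hn
      exact hn
    linarith
  intro x
  have := hzero x
  simp only [hg] at this
  linarith

lemma bddNearZero_of_measurable_additive (g : ℝ → ℝ)
    (hgadd : ∀ x y : ℝ, g (x + y) = g x + g y) (hm : Measurable g) :
    ∃ M : ℝ, ∀ᶠ x in nhds (0:ℝ), |g x| ≤ M := by
  have hgsub : ∀ a b : ℝ, g (a - b) = g a - g b := by
    intro a b
    have h := hgadd (a - b) b
    rw [sub_add_cancel] at h
    linarith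
  set E : ℕ → Set ℝ := fun n => Icc (0:ℝ) 1 ∩ {x | |g x| ≤ n} with hE
  have hEm : ∀ n, MeasurableSet (E n) := by
    intro n
    exact measurableSet_Icc.inter (hm.abs measurableSet_Iic)
  have hcover : Icc (0:ℝ) 1 ⊆ ⋃ n, E n := by
    intro x hx
    exact mem_iUnion.mpr ⟨⌈|g x|⌉₊, hx, by simpa using Nat.le_ceil |g x|⟩
  have hex : ∃ n, 0 < volume (E n) := by
    by_contra h
    push_neg at h
    have h0 : volume (⋃ n, E n) = 0 :=
      measure_iUnion_null fun n => nonpos_iff_eq_zero.mp (h n)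
    have h1 : volume (Icc (0:ℝ) 1) ≤ volume (⋃ n, E n) := measure_mono hcover
    rw [h0] at h1
    simp [Real.volume_Icc] at h1
  obtain ⟨n, hn⟩ := hex
  have hsub := MeasureTheory.Measure.sub_mem_nhds_zero_of_addHaar_pos volume (E n) (hEm n) hn
  refine ⟨2 * n, ?_⟩
  filter_upwards [hsub] with x hx
  obtain ⟨a, ha, b, hb, hab⟩ := Set.mem_sub.mp hx
  have : g x = g a - g b := by rw [← hab, hgsub]
  rw [this]
  have h1 : |g a| ≤ n := ha.2
  have h2 : |g b| ≤ n := hb.2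
  calc |g a - g b| ≤ |g a| + |g b| := abs_sub _ _
    _ ≤ 2 * n := by linarith

lemma bdd_term (φ c σ : ℝ → ℝ) (hφ : ∀ x : ℝ, ∃ C : ℝ, ∀ᶠ y in nhds x, |φ y| ≤ C)
    (hc : Continuous c) (hσ : Continuous σ) :
    ∃ M : ℝ, ∀ᶠ u in nhds (0:ℝ), |c u * φ (σ u)| ≤ M := by
  obtain ⟨C, hC⟩ := hφ (σ 0)
  refine ⟨(|c 0| + 1) * max C 0, ?_⟩
  have h1 : ∀ᶠ u in nhds (0:ℝ), |φ (σ u)| ≤ C := (hσ.tendsto 0).eventually hC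
  have h2 : ∀ᶠ u in nhds (0:ℝ), |c u - c 0| < 1 := by
    have := Metric.tendsto_nhds.mp (hc.tendsto 0) 1 one_pos
    simpa [Real.dist_eq] using this
  filter_upwards [h1, h2] with u hu1 hu2
  have hcu : |c u| ≤ |c 0| + 1 := by
    calc |c u| = |(c u - c 0) + c 0| := by ring_nf
      _ ≤ |c u - c 0| + |c 0| := abs_add_le _ _
      _ ≤ |c 0| + 1 := by linarith
  calc |c u * φ (σ u)| = |c u| * |φ (σ u)| := abs_mul _ _
    _ ≤ (|c 0| + 1) * max C 0 :=
      mul_le_mul hcu (le_trans hu1 (le_max_left _ _)) (abs_nonneg _) (by positivity)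

lemma key_identity (d : ℝ → ℝ) (hd : ∀ x y : ℝ, d (x + y) = d x + d y)
    (φ : ℝ → ℝ)
    (hφ : ∀ x : ℝ, d (Real.arsinh x) = φ x + d x / Real.sqrt (1 + x ^ 2))
    (w : ℝ) (hw : 1 ≤ w) (u : ℝ) :
    2 * w * d (u * w) =
      2 * w ^ 2 * d u + 2 * u * Real.sqrt (w ^ 2 - 1) * d (Real.sqrt (w ^ 2 - 1))
      + 2 * Real.sqrt (u ^ 2 + 1) * w ^ 2 * φ u
      + 2 * u * Real.sqrt (w ^ 2 - 1) * w * φ (Real.sqrt (w ^ 2 - 1))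
      - w * ((Real.sqrt (u ^ 2 + 1) * w + u * Real.sqrt (w ^ 2 - 1)) *
              φ (u * w + Real.sqrt (u ^ 2 + 1) * Real.sqrt (w ^ 2 - 1))
           + (Real.sqrt (u ^ 2 + 1) * w - u * Real.sqrt (w ^ 2 - 1)) *
              φ (u * w - Real.sqrt (u ^ 2 + 1) * Real.sqrt (w ^ 2 - 1))) := by
  have hw0 : (0:ℝ) < w := lt_of_lt_of_le one_pos hw
  set v := Real.sqrt (w ^ 2 - 1) with hvdef
  set p := Real.sqrt (u ^ 2 + 1) with hpdef
  have hv2 : v ^ 2 = w ^ 2 - 1 := Real.sq_sqrt (by nlinarith)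
  have hp0 : (0:ℝ) < p := Real.sqrt_pos.mpr (by positivity)
  set t := Real.arsinh u with htdef
  set s := Real.arsinh v with hsdef
  have hsinht : Real.sinh t = u := Real.sinh_arsinh u
  have hcosht : Real.cosh t = p := by
    rw [htdef, Real.cosh_arsinh, hpdef, add_comm]
  have hsinhs : Real.sinh s = v := Real.sinh_arsinh v
  have hcoshs : Real.cosh s = w := by
    rw [hsdef, Real.cosh_arsinh]
    rw [show (1:ℝ) + v ^ 2 = w ^ 2 by rw [hv2]; ring]
    exact Real.sqrt_sq hw0.le
  have hdsub : ∀ a b : ℝ, d (a - b) = d a - d b := by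
    intro a b
    have h := hd (a - b) b
    rw [sub_add_cancel] at h
    linarith
  -- d on sinh values
  have hdsinh : ∀ y : ℝ, d (Real.sinh y) =
      Real.cosh y * d y - Real.cosh y * φ (Real.sinh y) := by
    intro y
    have h := hφ (Real.sinh y)
    rw [Real.arsinh_sinh] at h
    have e : Real.sqrt (1 + Real.sinh y ^ 2) = Real.cosh y := by
      rw [show (1:ℝ) + Real.sinh y ^ 2 = Real.cosh y ^ 2 by rw [Real.cosh_sq]; ring]
      exact Real.sqrt_sq (Real.cosh_pos y).le
    rw [e] at h
    have hc : Real.cosh y ≠ 0 := (Real.cosh_pos y).ne'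
    field_simp at h
    linarith
  have hDt : p * d t = p * φ u + d u := by
    have h := hφ u
    rw [← htdef] at h
    rw [show Real.sqrt (1 + u ^ 2) = p by rw [hpdef, add_comm]] at h
    rw [h]
    field_simp
  have hDs : w * d s = w * φ v + d v := by
    have h := hφ v
    rw [← hsdef] at h
    rw [show Real.sqrt (1 + v ^ 2) = w by
      rw [show (1:ℝ) + v ^ 2 = w ^ 2 by rw [hv2]; ring]; exact Real.sqrt_sq hw0.le] at h
    rw [h]
    field_simp
  have hsinhadd : Real.sinh (t + s) = u * w + p * v := by
    rw [Real.sinh_add, hsinht, hcosht, hsinhs, hcoshs]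
  have hsinhsub : Real.sinh (t - s) = u * w - p * v := by
    rw [Real.sinh_sub, hsinht, hcosht, hsinhs, hcoshs]
  have hcoshadd : Real.cosh (t + s) = p * w + u * v := by
    rw [Real.cosh_add, hsinht, hcosht, hsinhs, hcoshs]
  have hcoshsub : Real.cosh (t - s) = p * w - u * v := by
    rw [Real.cosh_sub, hsinht, hcosht, hsinhs, hcoshs]
  have h1 : d (Real.sinh (t + s)) + d (Real.sinh (t - s)) = d (u * w) + d (u * w) := by
    rw [← hd, ← hd]
    congr 1
    rw [hsinhadd, hsinhsub]; ring
  rw [hdsinh (t + s), hdsinh (t - s), hcoshadd, hcoshsub, hsinhadd, hsinhsub,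
    hd t s, hdsub t s] at h1
  linear_combination (-w) * h1 + 2 * w ^ 2 * hDt + 2 * u * v * hDs


lemma bdd_four (φ c1 c2 c3 c4 σ1 σ2 σ3 σ4 : ℝ → ℝ)
    (hφ : ∀ x : ℝ, ∃ C : ℝ, ∀ᶠ y in nhds x, |φ y| ≤ C)
    (hc1 : Continuous c1) (hc2 : Continuous c2) (hc3 : Continuous c3) (hc4 : Continuous c4)
    (hσ1 : Continuous σ1) (hσ2 : Continuous σ2) (hσ3 : Continuous σ3) (hσ4 : Continuous σ4) :
    ∃ M : ℝ, ∀ᶠ u in nhds (0:ℝ),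
      |c1 u * φ (σ1 u) + c2 u * φ (σ2 u) + c3 u * φ (σ3 u) + c4 u * φ (σ4 u)| ≤ M := by
  obtain ⟨M1, h1⟩ := bdd_term φ c1 σ1 hφ hc1 hσ1
  obtain ⟨M2, h2⟩ := bdd_term φ c2 σ2 hφ hc2 hσ2
  obtain ⟨M3, h3⟩ := bdd_term φ c3 σ3 hφ hc3 hσ3
  obtain ⟨M4, h4⟩ := bdd_term φ c4 σ4 hφ hc4 hσ4
  refine ⟨M1 + M2 + M3 + M4, ?_⟩
  filter_upwards [h1, h2, h3, h4] with u hu1 hu2 hu3 hu4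
  calc |c1 u * φ (σ1 u) + c2 u * φ (σ2 u) + c3 u * φ (σ3 u) + c4 u * φ (σ4 u)|
      ≤ |c1 u * φ (σ1 u) + c2 u * φ (σ2 u) + c3 u * φ (σ3 u)| + |c4 u * φ (σ4 u)| :=
        abs_add_le _ _
    _ ≤ (|c1 u * φ (σ1 u) + c2 u * φ (σ2 u)| + |c3 u * φ (σ3 u)|) + |c4 u * φ (σ4 u)| := by
        gcongr; exact abs_add_le _ _
    _ ≤ ((|c1 u * φ (σ1 u)| + |c2 u * φ (σ2 u)|) + |c3 u * φ (σ3 u)|) + |c4 u * φ (σ4 u)| := by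
        gcongr; exact abs_add_le _ _
    _ ≤ M1 + M2 + M3 + M4 := by linarith

end AuxiliaryLemmas

theorem stmt_11 (d : ℝ → ℝ)
    (hd : ∀ x y : ℝ, d (x + y) = d x + d y)
    (hreg : RegularOn
      (fun x : ℝ => d (Real.log (x + Real.sqrt (x ^ 2 + 1))) -
        (1 / Real.sqrt (x ^ 2 + 1)) * d x)
      Set.univ) :
    ∃ χ : ℝ → ℝ, IsRealDerivation χ ∧ ∀ x : ℝ, d x = χ x + d 1 * x := by
  set φ : ℝ → ℝ := fun x : ℝ => d (Real.log (x + Real.sqrt (x ^ 2 + 1))) -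
      (1 / Real.sqrt (x ^ 2 + 1)) * d x with hφdef
  have hφ : ∀ x : ℝ, d (Real.arsinh x) = φ x + d x / Real.sqrt (1 + x ^ 2) := by
    intro x
    have e1 : Real.arsinh x = Real.log (x + Real.sqrt (x ^ 2 + 1)) := by
      rw [show Real.arsinh x = Real.log (x + Real.sqrt (1 + x ^ 2)) from rfl,
        add_comm (1:ℝ) (x ^ 2)]
    simp only [hφdef, e1, add_comm (1:ℝ) (x ^ 2)]
    ring
  have hregcases : (∀ x : ℝ, ∃ C : ℝ, ∀ᶠ y in nhds x, |φ y| ≤ C) ∨ Measurable φ := by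
    have hreg' : LocallyBoundedOn φ Set.univ ∨ ContinuousOn φ Set.univ ∨
        Measurable (Set.univ.restrict φ) := hreg
    rcases hreg' with h | h | h
    · left
      intro x
      obtain ⟨C, hC⟩ := h x (mem_univ x)
      exact ⟨C, by rwa [nhdsWithin_univ] at hC⟩
    · left
      intro x
      have hc : Continuous φ := continuousOn_univ.mp h
      refine ⟨|φ x| + 1, ?_⟩
      have ht := Metric.tendsto_nhds.mp (hc.tendsto x) 1 one_pos
      filter_upwards [ht] with y hy
      rw [Real.dist_eq] at hy
      calc |φ y| = |(φ y - φ x) + φ x| := by ring_nf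
        _ ≤ |φ y - φ x| + |φ x| := abs_add_le _ _
        _ ≤ |φ x| + 1 := by linarith
    · right
      have e : φ = (Set.univ.restrict φ) ∘ (MeasurableEquiv.Set.univ ℝ).symm := rfl
      rw [e]
      exact h.comp (MeasurableEquiv.measurable _)
  -- main multiplicative relation
  have hmul : ∀ w : ℝ, 1 ≤ w → ∀ u : ℝ, d (u * w) = w * d u + (d w - w * d 1) * u := by
    intro w hw
    have hw0 : (0:ℝ) < w := lt_of_lt_of_le one_pos hw
    set v := Real.sqrt (w ^ 2 - 1) with hvdef
    set k : ℝ := v * d v / w with hkdef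
    set G : ℝ → ℝ := fun u => d (u * w) - w * d u - k * u with hG
    have hGadd : ∀ a b : ℝ, G (a + b) = G a + G b := by
      intro a b; simp only [hG]
      rw [show (a + b) * w = a * w + b * w by ring, hd, hd]; ring
    have hkw : w * k = v * d v := by
      rw [hkdef]; field_simp
    have hGR : ∀ u : ℝ, G u =
        (fun u : ℝ => Real.sqrt (u ^ 2 + 1) * w) u * φ ((fun u : ℝ => u) u)
        + (fun u : ℝ => u * v) u * φ ((fun _ : ℝ => v) u)
        + (fun u : ℝ => -(Real.sqrt (u ^ 2 + 1) * w + u * v) / 2) u *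
            φ ((fun u : ℝ => u * w + Real.sqrt (u ^ 2 + 1) * v) u)
        + (fun u : ℝ => -(Real.sqrt (u ^ 2 + 1) * w - u * v) / 2) u *
            φ ((fun u : ℝ => u * w - Real.sqrt (u ^ 2 + 1) * v) u) := by
      intro u
      have key := key_identity d hd φ hφ w hw u
      rw [← hvdef] at key
      have h2w : (2 * w) * (G u) = (2 * w) *
          (Real.sqrt (u ^ 2 + 1) * w * φ u + u * v * φ v
            + (-(Real.sqrt (u ^ 2 + 1) * w + u * v) / 2) * φ (u * w + Real.sqrt (u ^ 2 + 1) * v)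
            + (-(Real.sqrt (u ^ 2 + 1) * w - u * v) / 2) * φ (u * w - Real.sqrt (u ^ 2 + 1) * v)) := by
        simp only [hG]
        linear_combination key - 2 * u * hkw
      have := mul_left_cancel₀ (show (2 * w : ℝ) ≠ 0 by positivity) h2w
      simpa using this
    have hGlin : ∀ u : ℝ, G u = G 1 * u := by
      rcases hregcases with hb | hm
      · apply additive_eq_linear_of_bdd G hGadd
        obtain ⟨M, hM⟩ := bdd_four φ
          (fun u : ℝ => Real.sqrt (u ^ 2 + 1) * w)
          (fun u : ℝ => u * v)
          (fun u : ℝ => -(Real.sqrt (u ^ 2 + 1) * w + u * v) / 2)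
          (fun u : ℝ => -(Real.sqrt (u ^ 2 + 1) * w - u * v) / 2)
          (fun u : ℝ => u)
          (fun _ : ℝ => v)
          (fun u : ℝ => u * w + Real.sqrt (u ^ 2 + 1) * v)
          (fun u : ℝ => u * w - Real.sqrt (u ^ 2 + 1) * v)
          hb
          (by fun_prop) (by fun_prop) (by fun_prop) (by fun_prop)
          (by fun_prop) (by fun_prop) (by fun_prop) (by fun_prop)
        refine ⟨M, ?_⟩
        filter_upwards [hM] with u hu
        rw [hGR u]
        exact hu
      · apply additive_eq_linear_of_bdd G hGadd
        apply bddNearZero_of_measurable_additive G hGadd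
        have hGfun : G = fun u : ℝ =>
            (fun u : ℝ => Real.sqrt (u ^ 2 + 1) * w) u * φ ((fun u : ℝ => u) u)
            + (fun u : ℝ => u * v) u * φ ((fun _ : ℝ => v) u)
            + (fun u : ℝ => -(Real.sqrt (u ^ 2 + 1) * w + u * v) / 2) u *
                φ ((fun u : ℝ => u * w + Real.sqrt (u ^ 2 + 1) * v) u)
            + (fun u : ℝ => -(Real.sqrt (u ^ 2 + 1) * w - u * v) / 2) u *
                φ ((fun u : ℝ => u * w - Real.sqrt (u ^ 2 + 1) * v) u) := funext hGR
        rw [hGfun]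
        apply Measurable.add
        apply Measurable.add
        apply Measurable.add
        · exact ((Real.continuous_sqrt.comp (by fun_prop)).mul continuous_const).measurable.mul
            (hm.comp measurable_id)
        · exact (measurable_id.mul measurable_const).mul (hm.comp measurable_const)
        · exact (by fun_prop : Continuous fun u : ℝ => -(Real.sqrt (u ^ 2 + 1) * w + u * v) / 2).measurable.mul
            (hm.comp (by fun_prop : Continuous fun u : ℝ => u * w + Real.sqrt (u ^ 2 + 1) * v).measurable)
        · exact (by fun_prop : Continuous fun u : ℝ => -(Real.sqrt (u ^ 2 + 1) * w - u * v) / 2).measurable.mul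
            (hm.comp (by fun_prop : Continuous fun u : ℝ => u * w - Real.sqrt (u ^ 2 + 1) * v).measurable)
    intro u
    have h := hGlin u
    have hG1 : G 1 = d w - w * d 1 - k := by
      simp only [hG]; rw [one_mul, mul_one]
    simp only [hG] at h
    linear_combination h + u * hG1
  -- the derivation
  set χ : ℝ → ℝ := fun x => d x - d 1 * x with hχdef
  have hχadd : ∀ x y : ℝ, χ (x + y) = χ x + χ y := by
    intro x y; simp only [hχdef]; rw [hd]; ring
  have hχ0 : χ 0 = 0 := by
    have := hχadd 0 0; rw [add_zero] at this; linarith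
  have hχneg : ∀ x : ℝ, χ (-x) = -χ x := by
    intro x
    have := hχadd x (-x)
    rw [add_neg_cancel, hχ0] at this
    linarith
  have hχnat : ∀ (n : ℕ) (x : ℝ), χ ((n : ℝ) * x) = (n : ℝ) * χ x := by
    intro n x
    have := additive_ratSmul χ hχadd (n : ℚ) x
    simpa using this
  have hχw : ∀ w : ℝ, 1 ≤ w → ∀ u : ℝ, χ (u * w) = u * χ w + w * χ u := by
    intro w hw u
    have h := hmul w hw u
    simp only [hχdef]
    linear_combination h
  have hpos : ∀ y : ℝ, 0 < y → ∀ x : ℝ, χ (x * y) = x * χ y + y * χ x := by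
    intro y hy x
    obtain ⟨n, hn⟩ := exists_nat_ge (1 / y)
    have hn0 : (0:ℝ) < n := lt_of_lt_of_le (by positivity) hn
    have hy1 : 1 ≤ (n : ℝ) * y := by
      rw [div_le_iff₀ hy] at hn; linarith
    have h1 := hχw ((n : ℝ) * y) hy1 x
    rw [show x * ((n : ℝ) * y) = (n : ℝ) * (x * y) by ring, hχnat n (x * y),
      hχnat n y] at h1
    have h2 : (n : ℝ) * χ (x * y) = (n : ℝ) * (x * χ y + y * χ x) := by
      linear_combination h1
    exact mul_left_cancel₀ hn0.ne' h2
  have hχmul : ∀ x y : ℝ, χ (x * y) = x * χ y + y * χ x := by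
    intro x y
    rcases lt_trichotomy y 0 with h | h | h
    · have hneg := hpos (-y) (by linarith) x
      have e : χ (x * y) = -χ (x * (-y)) := by
        rw [show x * y = -(x * (-y)) by ring, hχneg]
      rw [e, hneg, hχneg]
      ring
    · rw [h, mul_zero, hχ0]; ring
    · exact hpos y h x
  refine ⟨χ, ⟨hχadd, hχmul⟩, ?_⟩
  intro x
  simp only [hχdef]
  ring
end
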